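/- arXiv:2011.10279 — 7 statements merged into one kernel-verified Lean document; each statement's English description precedes it below -/
import Mathlib

section
/- Let E ⊆ ℝⁿ be an arbitrary set, f : E → ℝ, G : E → ℝⁿ, and M > 0. Then the following are equivalent: (a) f(x) − f(y) − ⟨G(y), x − y⟩ ≥ (1/(2M))·|G(x) − G(y)|² for all x, y ∈ E; (b) f(z) + ⟨G(z), x − z⟩ ≤ f(y) + ⟨G(y), x − y⟩ + (M/2)·|x − y|² for all y, z ∈ E and all x ∈ ℝⁿ. -/
open Set

/-- equivalence of the two conditions in Lemma L1. -/
theorem lusin_stmt_1 {n : ℕ} (E : Set (EuclideanSpace ℝ (Fin n)))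
    (f : EuclideanSpace ℝ (Fin n) → ℝ)
    (G : EuclideanSpace ℝ (Fin n) → EuclideanSpace ℝ (Fin n))
    (M : ℝ) (hM : 0 < M) :
    (∀ x ∈ E, ∀ y ∈ E,
        f x - f y - (inner ℝ (G y) (x - y) : ℝ) ≥ (1 / (2 * M)) * ‖G x - G y‖ ^ 2) ↔
      (∀ y ∈ E, ∀ z ∈ E, ∀ x : EuclideanSpace ℝ (Fin n),
        f z + (inner ℝ (G z) (x - z) : ℝ) ≤
          f y + (inner ℝ (G y) (x - y) : ℝ) + (M / 2) * ‖x - y‖ ^ 2) := by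
  constructor
  · intro ha y hy z hz x
    have h1 := ha y hy z hz
    have hid : (inner ℝ (G z) (x - z) : ℝ) - inner ℝ (G y) (x - y)
        = inner ℝ (G z - G y) (x - y) + inner ℝ (G z) (y - z) := by
      simp [inner_sub_left, inner_sub_right]; ring
    have hcs : (inner ℝ (G z - G y) (x - y) : ℝ) ≤ ‖G z - G y‖ * ‖x - y‖ :=
      real_inner_le_norm _ _
    have hrev : ‖G y - G z‖ = ‖G z - G y‖ := norm_sub_rev _ _
    rw [hrev] at h1
    have hineq : ‖G z - G y‖ * ‖x - y‖ ≤ (1 / (2 * M)) * ‖G z - G y‖ ^ 2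
        + (M / 2) * ‖x - y‖ ^ 2 := by
      have h4 : (1 / (2 * M)) * ‖G z - G y‖ ^ 2 + (M / 2) * ‖x - y‖ ^ 2
          - ‖G z - G y‖ * ‖x - y‖ = (1 / (2 * M)) * (M * ‖x - y‖ - ‖G z - G y‖) ^ 2 := by
        field_simp
        ring
      have h5 : (0:ℝ) ≤ (1 / (2 * M)) * (M * ‖x - y‖ - ‖G z - G y‖) ^ 2 := by positivity
      linarith
    have hy1 : (inner ℝ (G y) (x - y) : ℝ) = inner ℝ (G y) (x - y) := rfl
    -- from h1 : f y - f z - inner ℝ (G z) (y - z) ≥ (1/(2M)) ‖G z - G y‖^2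
    nlinarith [h1, hcs, hineq, hid]
  · intro hb x hx y hy
    set d := G x - G y with hd
    have h := hb x hx y hy (x - (1 / M) • d)
    have e1 : x - (1 / M) • d - y = (x - y) - (1 / M) • d := by abel
    have e2 : x - (1 / M) • d - x = -((1 / M) • d) := by abel
    rw [e1, e2] at h
    have i1 : (inner ℝ (G y) ((x - y) - (1 / M) • d) : ℝ)
        = inner ℝ (G y) (x - y) - (1 / M) * inner ℝ (G y) d := by
      rw [inner_sub_right, real_inner_smul_right]
    have i2 : (inner ℝ (G x) (-((1 / M) • d)) : ℝ)
        = -((1 / M) * inner ℝ (G x) d) := by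
      rw [inner_neg_right, real_inner_smul_right]
    have i3 : ‖-((1 / M) • d)‖ ^ 2 = (1 / M) ^ 2 * ‖d‖ ^ 2 := by
      rw [norm_neg, norm_smul]
      simp [mul_pow, abs_of_pos (by positivity : (0:ℝ) < 1 / M)]
    have i4 : (inner ℝ (G x) d : ℝ) - inner ℝ (G y) d = ‖d‖ ^ 2 := by
      rw [← inner_sub_left, ← hd, real_inner_self_eq_norm_sq]
    rw [i1, i2, i3] at h
    have hM' : M ≠ 0 := ne_of_gt hM
    have key : (1 / M) * ((inner ℝ (G x) d : ℝ) - inner ℝ (G y) d) = (1 / M) * ‖d‖ ^ 2 := by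
      rw [i4]
    have : (M / 2) * ((1 / M) ^ 2 * ‖d‖ ^ 2) = (1 / (2 * M)) * ‖d‖ ^ 2 := by
      field_simp
    rw [this] at h
    have expand : (1 / M) * ‖d‖ ^ 2 - (1 / (2 * M)) * ‖d‖ ^ 2 = (1 / (2 * M)) * ‖d‖ ^ 2 := by
      field_simp; ring
    nlinarith [h, key, expand]
end

section
/- Condition (b) of Lemma L1 implies condition (a): if f(z) + ⟨G(z), x − z⟩ ≤ f(y) + ⟨G(y), x − y⟩ + (M/2)·|x − y|² for all y, z ∈ E and all x ∈ ℝⁿ, then for all x, y ∈ E one has f(x) − f(y) − ⟨G(y), x − y⟩ ≥ (1/(2M))·|G(x) − G(y)|². The implication is proved by choosing ξ − x = (1/M)·(G(y) − G(x)). -/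
open Set

/-- condition (b) of Lemma L1 implies condition (a). -/
theorem lusin_stmt_2 {n : ℕ} (E : Set (EuclideanSpace ℝ (Fin n)))
    (f : EuclideanSpace ℝ (Fin n) → ℝ)
    (G : EuclideanSpace ℝ (Fin n) → EuclideanSpace ℝ (Fin n))
    (M : ℝ) (hM : 0 < M)
    (hb : ∀ y ∈ E, ∀ z ∈ E, ∀ x : EuclideanSpace ℝ (Fin n),
        f z + (inner ℝ (G z) (x - z) : ℝ) ≤
          f y + (inner ℝ (G y) (x - y) : ℝ) + (M / 2) * ‖x - y‖ ^ 2) :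
    ∀ x ∈ E, ∀ y ∈ E,
      f x - f y - (inner ℝ (G y) (x - y) : ℝ) ≥ (1 / (2 * M)) * ‖G x - G y‖ ^ 2 := by
  intro x hx y hy
  have h := hb x hx y hy (x + (M⁻¹ : ℝ) • (G y - G x))
  have e1 : x + (M⁻¹ : ℝ) • (G y - G x) - y = (x - y) + M⁻¹ • (G y - G x) := by
    abel
  have e2 : x + (M⁻¹ : ℝ) • (G y - G x) - x = M⁻¹ • (G y - G x) := by
    abel
  rw [e1, e2] at h
  rw [inner_add_right, real_inner_smul_right, real_inner_smul_right] at h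
  have hn : ‖M⁻¹ • (G y - G x)‖ = M⁻¹ * ‖G y - G x‖ := by
    rw [norm_smul, Real.norm_eq_abs, abs_of_pos (inv_pos.mpr hM)]
  rw [hn] at h
  have h1 : (inner ℝ (G y) (G y - G x) : ℝ) - (inner ℝ (G x) (G y - G x) : ℝ)
      = ‖G y - G x‖ ^ 2 := by
    rw [← inner_sub_left, real_inner_self_eq_norm_sq]
  have h2 : ‖G x - G y‖ = ‖G y - G x‖ := norm_sub_rev _ _
  rw [h2]
  have h3 : M⁻¹ * (inner ℝ (G y) (G y - G x) : ℝ) - M⁻¹ * (inner ℝ (G x) (G y - G x) : ℝ)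
      = M⁻¹ * ‖G y - G x‖ ^ 2 := by rw [← mul_sub, h1]
  have h4 : M / 2 * (M⁻¹ * ‖G y - G x‖) ^ 2 = 1 / (2 * M) * ‖G y - G x‖ ^ 2 := by
    field_simp
  have h5 : M⁻¹ * ‖G y - G x‖ ^ 2 - 1 / (2 * M) * ‖G y - G x‖ ^ 2
      = 1 / (2 * M) * ‖G y - G x‖ ^ 2 := by field_simp; ring
  linarith
end

section
/- Let P : ℝⁿ → X be the orthogonal projection onto a proper nonzero linear subspace X of ℝⁿ (1 ≤ dim X ≤ n−1), let c : X → ℝ be convex, and define f(x) = c(P(x)). If g : ℝⁿ → ℝ is any convex function such that the set {x ∈ ℝⁿ : f(x) ≠ g(x)} has finite Lebesgue measure, then g = f everywhere on ℝⁿ. -/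
set_option maxHeartbeats 1000000

open Set MeasureTheory Metric

private lemma disjoint_balls_volume_top' {n : ℕ} {E : Set (EuclideanSpace ℝ (Fin n))}
    (c : ℕ → EuclideanSpace ℝ (Fin n)) {r : ℝ} (hr : 0 < r)
    (hd : Pairwise fun i j => Disjoint (ball (c i) r) (ball (c j) r))
    (hsub : ∀ m, ball (c m) r ⊆ E) : volume E = ⊤ := by
  have h1 : volume (⋃ m, ball (c m) r) = ∑' m, volume (ball (c m) r) :=
    measure_iUnion hd fun m => measurableSet_ball
  have h2 : ∀ m : ℕ, volume (ball (c m) r) = volume (ball (0 : EuclideanSpace ℝ (Fin n)) r) :=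
    fun m => Measure.addHaar_ball_center volume (c m) r
  have h3 : volume (⋃ m, ball (c m) r) = ⊤ := by
    rw [h1]
    simp_rw [h2]
    exact ENNReal.tsum_const_eq_top_of_ne_zero (measure_ball_pos volume 0 hr).ne'
  exact top_le_iff.mp (h3 ▸ measure_mono (iUnion_subset hsub))

private lemma nat_abs_one_le {i j : ℕ} (hij : i ≠ j) : (1:ℝ) ≤ |(i:ℝ) - (j:ℝ)| := by
  have h1 : ((i:ℤ) - j) ≠ 0 := sub_ne_zero.mpr (by exact_mod_cast hij)
  have h2 : 1 ≤ |(i:ℤ) - j| := Int.one_le_abs h1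
  have h3 : ((|(i:ℤ) - j| : ℤ) : ℝ) = |(i:ℝ) - j| := by
    push_cast [Int.cast_abs]
    norm_num
  calc (1:ℝ) ≤ ((|(i:ℤ) - j| : ℤ) : ℝ) := by exact_mod_cast h2
  _ = |(i:ℝ) - j| := h3

/-- if `f = c ∘ P` with `P` the orthogonal projection onto a proper nonzero
subspace `X` and `c` convex, and `g` is convex with `{f ≠ g}` of finite measure, then `g = f`. -/
theorem lusin_stmt_3 {n : ℕ} (X : Submodule ℝ (EuclideanSpace ℝ (Fin n)))
    (hX1 : 1 ≤ Module.finrank ℝ X) (hX2 : Module.finrank ℝ X ≤ n - 1)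
    (c : X → ℝ) (hc : ConvexOn ℝ Set.univ c)
    (f g : EuclideanSpace ℝ (Fin n) → ℝ)
    (hf : ∀ x, f x = c (X.orthogonalProjectionOnto x))
    (hg : ConvexOn ℝ Set.univ g)
    (hfin : volume {x : EuclideanSpace ℝ (Fin n) | f x ≠ g x} < ⊤) :
    ∀ x, g x = f x := by
  have hn : 2 ≤ n := by
    have h := X.finrank_le
    rw [finrank_euclideanSpace_fin] at h
    omega
  have horth : 0 < Module.finrank ℝ Xᗮ := by
    have h := Submodule.finrank_add_finrank_orthogonal X
    rw [finrank_euclideanSpace_fin] at h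
    omega
  obtain ⟨v0, hv0mem, hv0⟩ : ∃ v0 ∈ Xᗮ, v0 ≠ (0:EuclideanSpace ℝ (Fin n)) := by
    have hbot : Xᗮ ≠ ⊥ := by
      intro h
      rw [h] at horth
      simp at horth
    exact Submodule.exists_mem_ne_zero_of_ne_bot hbot
  set v : EuclideanSpace ℝ (Fin n) := ‖v0‖⁻¹ • v0 with hvdef
  have hvmem : v ∈ Xᗮ := Xᗮ.smul_mem _ hv0mem
  have hv1 : ‖v‖ = 1 := by
    rw [hvdef, norm_smul, norm_inv, norm_norm, inv_mul_cancel₀ (norm_ne_zero_iff.mpr hv0)]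
  -- f is invariant along any direction in Xᗮ
  have hfP : ∀ w ∈ Xᗮ, ∀ (y : EuclideanSpace ℝ (Fin n)) (t : ℝ), f (y + t • w) = f y := by
    intro w hwmem y t
    rw [hf, hf]
    congr 1
    rw [map_add, LinearMapClass.map_smul,
      Submodule.orthogonalProjectionOnto_apply_of_mem_orthogonal hwmem]
    simp
  -- continuity
  have hc_cont : Continuous c := by
    rw [← continuousOn_univ]
    exact hc.continuousOn isOpen_univ
  have hf_cont : Continuous f := by
    have hcc : Continuous fun x => c (X.orthogonalProjectionOnto x) :=
      hc_cont.comp X.orthogonalProjectionOnto.continuous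
    convert hcc using 1
    funext x; exact hf x
  have hg_cont : Continuous g := by
    rw [← continuousOn_univ]
    exact hg.continuousOn isOpen_univ
  -- KEY: g cannot strictly increase along a unit direction of Xᗮ
  have hkey : ∀ w ∈ Xᗮ, ‖w‖ = 1 → ∀ (x₀ : EuclideanSpace ℝ (Fin n)) (s : ℝ), 0 < s →
      g (x₀ + s • w) ≤ g x₀ := by
    intro w hwmem hw1 x₀ s hs
    by_contra hlt
    push_neg at hlt
    set δ : ℝ := g (x₀ + s • w) - g x₀ with hδdef
    have hδ : 0 < δ := by simp only [hδdef]; linarith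
    set k : ℝ := f x₀ with hkdef
    obtain ⟨ε₀, hε₀, hfε₀⟩ : ∃ ε₀ > 0, ∀ y, dist y x₀ < ε₀ → f y < k + 1 := by
      rcases Metric.continuous_iff.mp hf_cont x₀ 1 one_pos with ⟨ε₀, hε₀, H⟩
      refine ⟨ε₀, hε₀, fun y hy => ?_⟩
      have h1 := H y hy
      rw [Real.dist_eq] at h1
      have h2 := abs_lt.mp h1
      simp only [hkdef]
      linarith [h2.2]
    set t : ℕ → ℝ := fun m => (m+1)*(s+3*ε₀) with htdef
    have htpos : ∀ m, 0 < t m := by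
      intro m
      have : (0:ℝ) < (m:ℝ)+1 := by positivity
      simp only [htdef]
      nlinarith
    have hts : ∀ m, s ≤ t m := by
      intro m
      have h1 : (1:ℝ) ≤ (m:ℝ)+1 := by
        have : (0:ℝ) ≤ (m:ℝ) := Nat.cast_nonneg m
        linarith
      simp only [htdef]
      nlinarith
    have htmono : ∀ i j : ℕ, i ≤ j → t i ≤ t j := by
      intro i j hij
      have : (i:ℝ) ≤ (j:ℝ) := by exact_mod_cast hij
      simp only [htdef]
      nlinarith
    -- linear growth along the ray
    have hgrow : ∀ T, s ≤ T → s * g x₀ + T * δ ≤ s * g (x₀ + T • w) := by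
      intro T hT
      have hT0 : 0 < T := lt_of_lt_of_le hs hT
      have hb0 : (0:ℝ) ≤ s / T := by positivity
      have hb1 : s / T ≤ 1 := by rw [div_le_one hT0]; exact hT
      have key := hg.2 (mem_univ x₀) (mem_univ (x₀ + T • w))
        (by linarith : (0:ℝ) ≤ 1 - s/T) hb0 (by ring)
      have hpt : (1 - s/T) • x₀ + (s/T) • (x₀ + T • w) = x₀ + s • w := by
        rw [smul_add, smul_smul, div_mul_cancel₀ _ hT0.ne']
        module
      rw [hpt] at key
      simp only [smul_eq_mul] at key
      have h3 := mul_le_mul_of_nonneg_left key hT0.le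
      have h4 : T * ((1 - s/T) * g x₀ + (s/T) * g (x₀ + T • w))
          = (T - s) * g x₀ + s * g (x₀ + T • w) := by
        field_simp
      rw [h4] at h3
      simp only [hδdef]
      nlinarith [h3]
    set M : ℝ := max (g x₀) (k+1) with hMdef
    have hgx₀M : g x₀ ≤ M := le_max_left _ _
    have hk1M : k + 1 ≤ M := le_max_right _ _
    -- choose a far point where g is large
    obtain ⟨J, hJ⟩ := exists_nat_gt (s*(M+1-g x₀)/((s+3*ε₀)*δ))
    have hJgt : M + 1 < g (x₀ + t J • w) := by
      have h1 := hgrow (t J) (hts J)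
      have h2 : s*(M+1-g x₀) < t J * δ := by
        have hden : (0:ℝ) < (s+3*ε₀)*δ := by positivity
        have := (div_lt_iff₀ hden).mp hJ
        simp only [htdef]
        nlinarith [this]
      have h5 : s*(M+1) < s * g (x₀ + t J • w) := by linarith
      exact (mul_lt_mul_iff_right₀ hs).mp h5
    set cJ : EuclideanSpace ℝ (Fin n) := x₀ + t J • w with hcJdef
    obtain ⟨η, hη, hηg⟩ : ∃ η > 0, ∀ p, dist p cJ < η → g cJ - 1 < g p := by
      rcases Metric.continuous_iff.mp hg_cont cJ 1 one_pos with ⟨η, hη, H⟩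
      refine ⟨η, hη, fun p hp => ?_⟩
      have h1 := H p hp
      rw [Real.dist_eq] at h1
      have h2 := abs_lt.mp h1
      linarith [h2.1]
    -- choose m with t m large enough
    obtain ⟨m, hm⟩ := exists_nat_gt (max (J:ℝ) (t J * ε₀ / (η * (s+3*ε₀))))
    have hmJ : t J ≤ t m := by
      apply htmono
      have := lt_of_le_of_lt (le_max_left (J:ℝ) _) hm
      exact_mod_cast this.le
    have hmη : t J * ε₀ < t m * η := by
      have h1 := lt_of_le_of_lt (le_max_right (J:ℝ) (t J * ε₀ / (η * (s+3*ε₀)))) hm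
      have hden : (0:ℝ) < η * (s+3*ε₀) := by positivity
      have h2 := (div_lt_iff₀ hden).mp h1
      have h6 : (m:ℝ)*(η*(s+3*ε₀)) ≤ ((m:ℝ)+1)*(s+3*ε₀)*η := by nlinarith [hden]
      simp only [htdef] at h2 ⊢
      nlinarith [h2, h6]
    -- find a far ball containing a point where f = g
    have hbad : ∃ m', m ≤ m' ∧ ∃ z, dist z (x₀ + t m' • w) < ε₀ ∧ f z = g z := by
      by_contra hco
      push_neg at hco
      have hvol : volume {x : EuclideanSpace ℝ (Fin n) | f x ≠ g x} = ⊤ := by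
        apply disjoint_balls_volume_top' (fun i => x₀ + t (m + i) • w) hε₀
        · intro i j hij
          apply ball_disjoint_ball
          have hd1 : dist (x₀ + t (m+i) • w) (x₀ + t (m+j) • w) = |t (m+i) - t (m+j)| := by
            rw [dist_eq_norm]
            have he : (x₀ + t (m+i) • w) - (x₀ + t (m+j) • w) = (t (m+i) - t (m+j)) • w := by
              module
            rw [he, norm_smul, hw1, mul_one, Real.norm_eq_abs]
          rw [hd1]
          have he2 : t (m+i) - t (m+j) = ((i:ℝ) - (j:ℝ)) * (s+3*ε₀) := by
            simp only [htdef]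
            push_cast
            ring
          rw [he2, abs_mul, abs_of_pos (by positivity : (0:ℝ) < s+3*ε₀)]
          have h1 : (1:ℝ) ≤ |(i:ℝ) - (j:ℝ)| := nat_abs_one_le hij
          nlinarith [h1]
        · intro i z hz
          exact hco (m+i) (Nat.le_add_right m i) z (mem_ball.mp hz)
      exact absurd hvol (by rw [lt_top_iff_ne_top] at hfin; exact hfin)
    obtain ⟨m', hmm', z, hzdist, hzfg⟩ := hbad
    have htm' : 0 < t m' := htpos m'
    have hmm'2 : t m ≤ t m' := htmono m m' hmm'
    set lam : ℝ := t J / t m' with hlamdef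
    have hlam0 : 0 < lam := by positivity
    have hlam1 : lam ≤ 1 := by
      rw [hlamdef, div_le_one htm']
      exact le_trans hmJ hmm'2
    have hlamt : lam * t m' = t J := div_mul_cancel₀ _ htm'.ne'
    -- g z is small
    have hz2 : f z = f (z - t m' • w) := by
      have h1 := hfP w hwmem (z - t m' • w) (t m')
      rw [sub_add_cancel] at h1
      exact h1
    have hzx₀ : dist (z - t m' • w) x₀ < ε₀ := by
      rw [dist_eq_norm] at hzdist ⊢
      have he : z - t m' • w - x₀ = z - (x₀ + t m' • w) := by module
      rw [he]
      exact hzdist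
    have hgz : g z < k + 1 := by
      rw [← hzfg, hz2]
      exact hfε₀ _ hzx₀
    -- the intermediate point
    set p : EuclideanSpace ℝ (Fin n) := x₀ + lam • (z - x₀) with hpdef
    have hp1 : p = (1-lam) • x₀ + lam • z := by
      simp only [hpdef]
      module
    have hgp_le : g p ≤ M := by
      have hcv := hg.2 (mem_univ x₀) (mem_univ z)
        (by linarith : (0:ℝ) ≤ 1 - lam) hlam0.le (by ring)
      rw [← hp1] at hcv
      simp only [smul_eq_mul] at hcv
      have : (1-lam) * g x₀ + lam * g z ≤ M := by nlinarith [hgx₀M, hk1M, hgz]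
      linarith [hcv]
    have hdistp : dist p cJ < η := by
      rw [dist_eq_norm]
      have he : p - cJ = lam • (z - (x₀ + t m' • w)) := by
        simp only [hpdef, hcJdef]
        rw [← hlamt]
        module
      rw [he, norm_smul, Real.norm_eq_abs, abs_of_pos hlam0]
      have h1 : ‖z - (x₀ + t m' • w)‖ < ε₀ := by
        rw [dist_eq_norm] at hzdist
        exact hzdist
      have h2 : lam * ‖z - (x₀ + t m' • w)‖ < lam * ε₀ :=
        mul_lt_mul_of_pos_left h1 hlam0
      have h3 : lam * ε₀ < η := by
        rw [hlamdef, div_mul_eq_mul_div, div_lt_iff₀ htm']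
        calc t J * ε₀ < t m * η := hmη
        _ ≤ t m' * η := mul_le_mul_of_nonneg_right hmm'2 hη.le
        _ = η * t m' := by ring
      linarith
    have := hηg p hdistp
    linarith [hJgt, hgp_le, this]
  -- hence g is invariant along v
  have hginv : ∀ (x : EuclideanSpace ℝ (Fin n)) (s : ℝ), g (x + s • v) = g x := by
    have hvmem' : -v ∈ Xᗮ := Xᗮ.neg_mem hvmem
    have hv1' : ‖-v‖ = 1 := by rw [norm_neg]; exact hv1
    have haux : ∀ (x : EuclideanSpace ℝ (Fin n)) (s : ℝ), 0 < s → g (x + s • v) = g x := by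
      intro x s hs
      apply le_antisymm (hkey v hvmem hv1 x s hs)
      have h1 := hkey (-v) hvmem' hv1' (x + s • v) s hs
      have he : x + s • v + s • (-v) = x := by module
      rw [he] at h1
      exact h1
    intro x s
    rcases lt_trichotomy s 0 with h | h | h
    · have h1 := haux (x + s • v) (-s) (by linarith)
      have he : x + s • v + (-s) • v = x := by module
      rw [he] at h1
      exact h1.symm
    · simp [h]
    · exact haux x s h
  -- conclude
  by_contra hcon
  push_neg at hcon
  obtain ⟨x₀, hx₀⟩ := hcon
  set E : Set (EuclideanSpace ℝ (Fin n)) := {x | f x ≠ g x} with hEdef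
  have hx₀E : x₀ ∈ E := fun h => hx₀ h.symm
  have hEopen : IsOpen E := by
    have : E = (fun x => f x - g x) ⁻¹' ({0}ᶜ) := by
      ext x
      simp [hEdef, sub_eq_zero]
    rw [this]
    exact (isOpen_compl_singleton).preimage (hf_cont.sub hg_cont)
  obtain ⟨ε, hε, hballE⟩ := Metric.isOpen_iff.mp hEopen x₀ hx₀E
  have hEinv : ∀ y ∈ E, ∀ s : ℝ, y + s • v ∈ E := by
    intro y hy s
    simp only [hEdef, mem_setOf_eq] at hy ⊢
    rw [hfP v hvmem y s, hginv y s]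
    exact hy
  have hvol : volume E = ⊤ := by
    apply disjoint_balls_volume_top' (fun i => x₀ + ((3*ε)*(i:ℝ)) • v) hε
    · intro i j hij
      apply ball_disjoint_ball
      have hd1 : dist (x₀ + ((3*ε)*(i:ℝ)) • v) (x₀ + ((3*ε)*(j:ℝ)) • v)
          = |(3*ε)*(i:ℝ) - (3*ε)*(j:ℝ)| := by
        rw [dist_eq_norm]
        have he : (x₀ + ((3*ε)*(i:ℝ)) • v) - (x₀ + ((3*ε)*(j:ℝ)) • v)
            = ((3*ε)*(i:ℝ) - (3*ε)*(j:ℝ)) • v := by module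
        rw [he, norm_smul, hv1, mul_one, Real.norm_eq_abs]
      rw [hd1]
      have he2 : (3*ε)*(i:ℝ) - (3*ε)*(j:ℝ) = ((i:ℝ) - (j:ℝ)) * (3*ε) := by ring
      rw [he2, abs_mul, abs_of_pos (by positivity : (0:ℝ) < 3*ε)]
      have h1 : (1:ℝ) ≤ |(i:ℝ) - (j:ℝ)| := nat_abs_one_le hij
      nlinarith [h1]
    · intro i y hy
      have hy' : y - ((3*ε)*(i:ℝ)) • v ∈ ball x₀ ε := by
        rw [mem_ball, dist_eq_norm] at hy ⊢
        have he : y - ((3*ε)*(i:ℝ)) • v - x₀ = y - (x₀ + ((3*ε)*(i:ℝ)) • v) := by module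
        rw [he]
        exact hy
      have h1 := hEinv _ (hballE hy') ((3*ε)*(i:ℝ))
      have he : y - ((3*ε)*(i:ℝ)) • v + ((3*ε)*(i:ℝ)) • v = y := by module
      rw [he] at h1
      exact h1
  exact absurd hvol (by rw [lt_top_iff_ne_top] at hfin; exact hfin)
end

section
/- Let f, g : ℝⁿ → ℝ be convex functions that are both differentiable at a point x, and suppose f = g on a measurable set E with x a Lebesgue density point of E. Then ∇f(x) = ∇g(x). Consequently, if f = g on a measurable set E, then ∇f = ∇g almost everywhere on E. -/
open Set MeasureTheory Metric Filter Topology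

lemma aux_loclip_ae_diff {n : ℕ} (f : EuclideanSpace ℝ (Fin n) → ℝ)
    (hf : LocallyLipschitz f) :
    ∀ᵐ x ∂(volume : Measure (EuclideanSpace ℝ (Fin n))), DifferentiableAt ℝ f x := by
  choose K t ht hlip using hf
  obtain ⟨s, hs, hcover⟩ := TopologicalSpace.countable_cover_nhds
    (f := fun x => interior (t x)) (fun x => interior_mem_nhds.2 (ht x))
  have H : ∀ x ∈ s, ∀ᵐ y ∂(volume : Measure (EuclideanSpace ℝ (Fin n))),
      y ∈ interior (t x) → DifferentiableAt ℝ f y := by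
    intro x _
    filter_upwards [(hlip x).ae_differentiableWithinAt_of_mem] with y hy hyi
    exact (hy (interior_subset hyi)).differentiableAt (mem_interior_iff_mem_nhds.1 hyi)
  filter_upwards [(ae_ball_iff hs).2 H] with y hy
  have hyu : y ∈ ⋃ x ∈ s, interior (t x) := hcover ▸ mem_univ y
  obtain ⟨x, hx, hyx⟩ := mem_iUnion₂.1 hyu
  exact hy x hx hyx

open scoped ENNReal

set_option maxHeartbeats 1000000 in
lemma aux_fderiv_zero {n : ℕ} (h : EuclideanSpace ℝ (Fin n) → ℝ)
    (E : Set (EuclideanSpace ℝ (Fin n))) (x : EuclideanSpace ℝ (Fin n))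
    (hd : DifferentiableAt ℝ h x) (h0 : ∀ y ∈ E, h y = 0)
    (hx : Tendsto (fun r : ℝ =>
        volume (E ∩ closedBall x r) / volume (closedBall x r)) (𝓝[>] 0) (𝓝 1)) :
    fderiv ℝ h x = 0 := by
  -- small balls around x meet E
  have hne : ∀ r > (0:ℝ), (E ∩ closedBall x r).Nonempty := by
    intro r hr
    have h1 : ∀ᶠ ρ in 𝓝[>] (0:ℝ),
        (1/2 : ℝ≥0∞) < volume (E ∩ closedBall x ρ) / volume (closedBall x ρ) :=
      hx (Ioi_mem_nhds (by norm_num))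
    have h2 : ∀ᶠ ρ in 𝓝[>] (0:ℝ), ρ < r :=
      (eventually_lt_nhds hr).filter_mono nhdsWithin_le_nhds
    have h3 : ∀ᶠ ρ in 𝓝[>] (0:ℝ), (0:ℝ) < ρ := eventually_mem_nhdsWithin
    obtain ⟨ρ, hρ1, hρ2, _⟩ := (h1.and (h2.and h3)).exists
    have hme : volume (E ∩ closedBall x ρ) ≠ 0 := by
      intro h0'
      rw [h0'] at hρ1
      simp at hρ1
    obtain ⟨y, hy⟩ := nonempty_of_measure_ne_zero hme
    exact ⟨y, hy.1, closedBall_subset_closedBall hρ2.le hy.2⟩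
  have hxcl : x ∈ closure E := by
    rw [Metric.mem_closure_iff]
    intro ε hε
    obtain ⟨y, hyE, hy⟩ := hne (ε/2) (by positivity)
    refine ⟨y, hyE, ?_⟩
    rw [dist_comm]
    exact lt_of_le_of_lt (mem_closedBall.1 hy) (by linarith)
  have hx0 : h x = 0 := by
    haveI hne' : (𝓝[E] x).NeBot := mem_closure_iff_nhdsWithin_neBot.1 hxcl
    refine tendsto_nhds_unique (hd.continuousAt.continuousWithinAt (s := E)) ?_
    refine tendsto_const_nhds.congr' ?_
    filter_upwards [self_mem_nhdsWithin] with y hy using (h0 y hy).symm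
  by_contra hL0
  set L := fderiv ℝ h x with hLdef
  obtain ⟨u, hu⟩ : ∃ u, L u ≠ 0 := by
    by_contra hc; push_neg at hc
    exact hL0 (ContinuousLinearMap.ext fun u => by simp [hc u])
  set v := (L u)⁻¹ • u with hv
  have hLv : L v = 1 := by
    simp [hv, _root_.map_smul, smul_eq_mul, inv_mul_cancel₀ hu]
  have hvne : v ≠ 0 := by
    intro hv0; rw [hv0] at hLv; simp at hLv
  set M := ‖v‖ with hM
  have hMpos : 0 < M := norm_pos_iff.2 hvne
  set ε := 1/(4*(‖L‖+1)) with hε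
  have hεpos : 0 < ε := by positivity
  set δ := 1/(4*(M+ε)) with hδ
  have hδpos : 0 < δ := by positivity
  set κ := (ε/(M+ε))^n with hκ
  have hκpos : 0 < κ := by positivity
  have hκle : κ ≤ 1 := by
    apply pow_le_one₀ (by positivity)
    rw [div_le_one (by positivity)]; linarith
  -- little-o estimate
  have hlo : ∀ᶠ y in 𝓝 x, ‖h y - h x - L (y - x)‖ ≤ δ * ‖y - x‖ :=
    Asymptotics.isLittleO_iff.mp hd.hasFDerivAt.isLittleO hδpos
  obtain ⟨ρ, hρpos, hρ⟩ := Metric.eventually_nhds_iff.1 hlo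
  set θ := ENNReal.ofReal (1 - κ/2) with hθ
  have hθ1 : θ < 1 := ENNReal.ofReal_lt_one.2 (by linarith)
  have e1 : ∀ᶠ R in 𝓝[>] (0:ℝ), (0:ℝ) < R := eventually_mem_nhdsWithin
  have e2 : ∀ᶠ R in 𝓝[>] (0:ℝ), R < ρ :=
    (eventually_lt_nhds hρpos).filter_mono nhdsWithin_le_nhds
  have e3 : ∀ᶠ R in 𝓝[>] (0:ℝ),
      θ < volume (E ∩ closedBall x R) / volume (closedBall x R) := hx (Ioi_mem_nhds hθ1)
  obtain ⟨R, hR0, hRρ, hRθ⟩ := (e1.and (e2.and e3)).exists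
  set t := R / (M + ε) with htdef
  have htpos : 0 < t := div_pos hR0 (by positivity)
  have htME : t * (M + ε) = R := div_mul_cancel₀ R (by positivity)
  set p := x + t • v with hp
  have hpx : p - x = t • v := add_sub_cancel_left x (t • v)
  have hdistpx : dist p x = t * M := by
    rw [dist_eq_norm, hpx, norm_smul, Real.norm_eq_abs, abs_of_pos htpos]
  have hpB : closedBall p (ε * t) ⊆ closedBall x R := by
    apply closedBall_subset_closedBall'
    rw [hdistpx]; nlinarith
  -- the small ball must meet E
  have hEp : (E ∩ closedBall p (ε * t)).Nonempty := by
    by_contra hemp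
    rw [not_nonempty_iff_eq_empty] at hemp
    have hdisj : Disjoint (E ∩ closedBall x R) (closedBall p (ε * t)) :=
      Set.disjoint_left.2 fun z hz hz' =>
        Set.notMem_empty z (hemp ▸ (Set.mem_inter hz.1 hz' : z ∈ E ∩ closedBall p (ε * t)))
    have hsum : volume (E ∩ closedBall x R) + volume (closedBall p (ε * t))
        ≤ volume (closedBall x R) := by
      rw [← measure_union hdisj measurableSet_closedBall]
      exact measure_mono (union_subset inter_subset_right hpB)
    set c := volume (ball (0 : EuclideanSpace ℝ (Fin n)) 1) with hc
    have hc0 : c ≠ 0 := (measure_ball_pos volume 0 one_pos).ne'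
    have hctop : c ≠ ⊤ := measure_ball_lt_top.ne
    have hV : volume (closedBall x R) = ENNReal.ofReal (R ^ n) * c := by
      rw [Measure.addHaar_closedBall volume x hR0.le, finrank_euclideanSpace_fin]
    have hV' : volume (closedBall p (ε * t)) = ENNReal.ofReal ((ε * t) ^ n) * c := by
      rw [Measure.addHaar_closedBall volume p (by positivity), finrank_euclideanSpace_fin]
    have hVne0 : volume (closedBall x R) ≠ 0 := by
      rw [hV]
      exact mul_ne_zero (by simp [ENNReal.ofReal_eq_zero, not_le]; positivity) hc0
    have hVnetop : volume (closedBall x R) ≠ ⊤ := measure_closedBall_lt_top.ne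
    have hθV : θ * volume (closedBall x R) < volume (E ∩ closedBall x R) :=
      (ENNReal.lt_div_iff_mul_lt (Or.inl hVne0) (Or.inl hVnetop)).1 hRθ
    have hlt : θ * volume (closedBall x R) + volume (closedBall p (ε * t))
        < volume (closedBall x R) :=
      lt_of_lt_of_le (ENNReal.add_lt_add_right measure_closedBall_lt_top.ne hθV) hsum
    have hltR : (θ * volume (closedBall x R)).toReal
        + (volume (closedBall p (ε * t))).toReal < (volume (closedBall x R)).toReal := by
      have f1 : θ * volume (closedBall x R) ≠ ⊤ :=
        ENNReal.mul_ne_top ENNReal.ofReal_ne_top hVnetop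
      have f2 : volume (closedBall p (ε * t)) ≠ ⊤ := measure_closedBall_lt_top.ne
      rw [← ENNReal.toReal_add f1 f2]
      exact (ENNReal.toReal_lt_toReal (ENNReal.add_ne_top.2 ⟨f1, f2⟩) hVnetop).2 hlt
    have hθR : θ.toReal = 1 - κ/2 := ENNReal.toReal_ofReal (by linarith)
    have hcR : 0 < c.toReal := ENNReal.toReal_pos hc0 hctop
    have hVR : (volume (closedBall x R)).toReal = R ^ n * c.toReal := by
      rw [hV, ENNReal.toReal_mul, ENNReal.toReal_ofReal (by positivity)]
    have hV'R : (volume (closedBall p (ε * t))).toReal = κ * (R ^ n * c.toReal) := by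
      rw [hV', ENNReal.toReal_mul, ENNReal.toReal_ofReal (by positivity)]
      have : ε * t = (ε / (M + ε)) * R := by
        rw [htdef]; field_simp
      rw [this, mul_pow, hκ]; ring
    rw [ENNReal.toReal_mul, hθR, hVR, hV'R] at hltR
    have hA : 0 < R ^ n * c.toReal := mul_pos (pow_pos hR0 n) hcR
    have hB : 0 < κ * (R ^ n * c.toReal) := mul_pos hκpos hA
    have hexp : (1 - κ/2) * (R ^ n * c.toReal) + κ * (R ^ n * c.toReal)
        = R ^ n * c.toReal + (κ * (R ^ n * c.toReal))/2 := by ring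
    linarith
  -- now derive the contradiction
  obtain ⟨y, hyE, hyp⟩ := hEp
  have hy0 : h y = 0 := h0 y hyE
  have hdyp : ‖y - p‖ ≤ ε * t := mem_closedBall_iff_norm.1 hyp
  have hyxd : y - x = (y - p) + t • v := by rw [← hpx]; abel
  have hyx : ‖y - x‖ ≤ R := by
    rw [hyxd]
    calc ‖(y - p) + t • v‖ ≤ ‖y - p‖ + ‖t • v‖ := norm_add_le _ _
      _ ≤ ε * t + t * M := by
          rw [norm_smul, Real.norm_eq_abs, abs_of_pos htpos]
          linarith
      _ = R := by rw [← htME]; ring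
  have hball : dist y x < ρ := by
    rw [dist_eq_norm]; exact lt_of_le_of_lt hyx hRρ
  have hest : ‖h y - h x - L (y - x)‖ ≤ δ * ‖y - x‖ := hρ hball
  rw [hy0, hx0] at hest
  simp only [sub_zero, zero_sub, norm_neg] at hest
  have hLyx : ‖L (y - x)‖ ≤ δ * R :=
    le_trans hest (mul_le_mul_of_nonneg_left hyx hδpos.le)
  have hkey : L (y - x) = L (y - p) + t := by
    rw [hyxd, map_add, _root_.map_smul, hLv, smul_eq_mul, mul_one]
  have h2 : ‖L (y - p)‖ ≤ ‖L‖ * (ε * t) :=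
    le_trans (L.le_opNorm _) (mul_le_mul_of_nonneg_left hdyp (norm_nonneg L))
  have hδR : δ * R = t / 4 := by
    rw [← htME, hδ]; field_simp
  have hLε : ‖L‖ * ε ≤ 1/4 := by
    rw [hε, mul_one_div, div_le_div_iff₀ (by positivity) (by norm_num)]
    nlinarith [norm_nonneg L]
  have ht1 : t ≤ ‖L (y - x)‖ + ‖L (y - p)‖ := by
    have : t = L (y - x) - L (y - p) := by rw [hkey]; ring
    rw [this]
    calc L (y - x) - L (y - p) ≤ |L (y - x) - L (y - p)| := le_abs_self _
      _ ≤ |L (y - x)| + |L (y - p)| := abs_sub _ _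
      _ = ‖L (y - x)‖ + ‖L (y - p)‖ := by rw [Real.norm_eq_abs, Real.norm_eq_abs]
  have : t ≤ t/4 + t/4 := by
    calc t ≤ ‖L (y - x)‖ + ‖L (y - p)‖ := ht1
      _ ≤ δ * R + ‖L‖ * (ε * t) := add_le_add hLyx h2
      _ ≤ t/4 + t/4 := by
          rw [hδR]
          have : ‖L‖ * (ε * t) = (‖L‖ * ε) * t := by ring
          rw [this]
          have h4 : (‖L‖ * ε) * t ≤ (1/4) * t :=
            mul_le_mul_of_nonneg_right hLε htpos.le
          linarith
  linarith

/-- two convex functions agreeing on a measurable set `E` have equal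
gradients at every density point of `E` where both are differentiable; consequently
their gradients agree a.e. on `E`. -/
theorem lusin_stmt_6 {n : ℕ} (f g : EuclideanSpace ℝ (Fin n) → ℝ)
    (hf : ConvexOn ℝ Set.univ f) (hg : ConvexOn ℝ Set.univ g)
    (E : Set (EuclideanSpace ℝ (Fin n))) (hE : MeasurableSet E)
    (heq : Set.EqOn f g E) :
    (∀ x : EuclideanSpace ℝ (Fin n),
        DifferentiableAt ℝ f x → DifferentiableAt ℝ g x →
        Tendsto (fun r : ℝ =>
            volume (E ∩ closedBall x r) / volume (closedBall x r)) (𝓝[>] 0) (𝓝 1) →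
        fderiv ℝ f x = fderiv ℝ g x) ∧
      (∀ᵐ x ∂volume, x ∈ E → fderiv ℝ f x = fderiv ℝ g x) := by
  have key : ∀ x : EuclideanSpace ℝ (Fin n),
      DifferentiableAt ℝ f x → DifferentiableAt ℝ g x →
      Tendsto (fun r : ℝ =>
          volume (E ∩ closedBall x r) / volume (closedBall x r)) (𝓝[>] 0) (𝓝 1) →
      fderiv ℝ f x = fderiv ℝ g x := by
    intro x hfx hgx hdx
    have h0 : ∀ y ∈ E, f y - g y = 0 := fun y hy => sub_eq_zero.2 (heq hy)
    have hz := aux_fderiv_zero (fun y => f y - g y) E x (hfx.sub hgx) h0 hdx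
    rw [fderiv_fun_sub hfx hgx] at hz
    exact sub_eq_zero.1 hz
  refine ⟨key, ?_⟩
  filter_upwards [Besicovitch.ae_tendsto_measure_inter_div_of_measurableSet volume hE,
    aux_loclip_ae_diff f hf.locallyLipschitz, aux_loclip_ae_diff g hg.locallyLipschitz]
    with x hx hfx hgx hxE
  have hx' : Tendsto (fun r : ℝ =>
      volume (E ∩ closedBall x r) / volume (closedBall x r)) (𝓝[>] 0) (𝓝 1) := by
    simpa [Set.indicator_of_mem hxE] using hx
  exact key x hfx hgx hx'
end

section
/- Let W ⊆ ℝⁿ be a closed convex set with 0 ∈ int(W) and μ its Minkowski functional. If μ⁻¹(0) contains no line, then μ is essentially coercive. (Together with the previous implications: W contains no line ⟺ ∂W contains no line ⟺ μ⁻¹(0) contains no line ⟺ μ is essentially coercive.) -/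
open Set Filter Bornology

lemma myGaugeSumLe {E : Type*} [NormedAddCommGroup E] [NormedSpace ℝ E]
    {W : Set E} (hWconv : Convex ℝ W) (habs : Absorbent ℝ W)
    {ι : Type*} (s : Finset ι) (μ : ι → ℝ) (z : ι → E) (hμ : ∀ i ∈ s, 0 ≤ μ i) :
    gauge W (∑ i ∈ s, μ i • z i) ≤ ∑ i ∈ s, μ i * gauge W (z i) := by
  classical
  induction s using Finset.induction_on with
  | empty => simp [gauge_zero]
  | @insert a s ha ih =>
    rw [Finset.sum_insert ha, Finset.sum_insert ha]
    refine (gauge_add_le hWconv habs _ _).trans (add_le_add ?_ ?_)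
    · rw [gauge_smul_of_nonneg (hμ a (Finset.mem_insert_self a s)), smul_eq_mul]
    · exact ih fun i hi => hμ i (Finset.mem_insert_of_mem hi)

lemma myIsCompactHull {E : Type*} [NormedAddCommGroup E] [NormedSpace ℝ E]
    [FiniteDimensional ℝ E] {K : Set E} (hK : IsCompact K) :
    IsCompact (convexHull ℝ K) := by
  classical
  rcases K.eq_empty_or_nonempty with h | ⟨k0, hk0⟩
  · simp [h]
  set m := Module.finrank ℝ E + 1 with hm
  set φ : (Fin m → ℝ) × (Fin m → E) → E := fun p => ∑ i, p.1 i • p.2 i with hφdef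
  have hφ : Continuous φ := by fun_prop
  have hD : IsCompact ((stdSimplex ℝ (Fin m)) ×ˢ (Set.univ.pi fun _ : Fin m => K)) :=
    (isCompact_stdSimplex _ _).prod (isCompact_univ_pi fun _ => hK)
  have himg : convexHull ℝ K =
      φ '' ((stdSimplex ℝ (Fin m)) ×ˢ (Set.univ.pi fun _ : Fin m => K)) := by
    apply Subset.antisymm
    · intro x hx
      rw [convexHull_eq_union] at hx
      simp only [Set.mem_iUnion] at hx
      obtain ⟨t, hts, hai, hxt⟩ := hx
      have hcard : t.card ≤ m := by
        have h1 := hai.card_le_finrank_succ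
        have h2 : Module.finrank ℝ (vectorSpan ℝ (Set.range ((↑) : t → E))) ≤ Module.finrank ℝ E :=
          Submodule.finrank_le _
        rw [Fintype.card_coe] at h1
        omega
      rw [Finset.convexHull_eq] at hxt
      obtain ⟨w, hw0, hw1, hwx⟩ := hxt
      have hx' : ∑ y ∈ t, w y • y = x := by
        rw [← Finset.centerMass_eq_of_sum_1 _ _ hw1]
        exact hwx
      have htne : t.Nonempty := Finset.nonempty_of_ne_empty (by rintro rfl; simp at hw1)
      haveI : Nonempty t := ⟨⟨htne.choose, htne.choose_spec⟩⟩
      obtain ⟨f⟩ : Nonempty (t ↪ Fin m) := by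
        rw [Function.Embedding.nonempty_iff_card_le, Fintype.card_coe, Fintype.card_fin]
        exact hcard
      set g : Fin m → t := fun i => Function.invFun f i with hg
      have hgf : ∀ y : t, g (f y) = y := fun y => Function.leftInverse_invFun f.injective y
      set w' : Fin m → ℝ := fun i => if i ∈ Finset.univ.map f then w (g i) else 0 with hw'
      set z' : Fin m → E := fun i => if i ∈ Finset.univ.map f then ((g i : t) : E) else k0 with hz'
      have h1 : ∑ i : Fin m, w' i • z' i = ∑ y : t, w y • (y : E) := by
        rw [← Finset.sum_subset (Finset.subset_univ (Finset.univ.map f))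
          (fun i _ hi => by simp only [hw']; rw [if_neg hi, zero_smul])]
        rw [Finset.sum_map]
        refine Finset.sum_congr rfl fun y _ => ?_
        have hmem : f y ∈ Finset.univ.map f := Finset.mem_map_of_mem f (Finset.mem_univ y)
        simp only [hw', hz']
        rw [if_pos hmem, if_pos hmem, hgf y]
      have h2 : ∑ i : Fin m, w' i = ∑ y : t, w y := by
        rw [← Finset.sum_subset (Finset.subset_univ (Finset.univ.map f))
          (fun i _ hi => by simp only [hw']; rw [if_neg hi])]
        rw [Finset.sum_map]
        refine Finset.sum_congr rfl fun y _ => ?_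
        have hmem : f y ∈ Finset.univ.map f := Finset.mem_map_of_mem f (Finset.mem_univ y)
        simp only [hw']
        rw [if_pos hmem, hgf y]
      refine ⟨(w', z'), ⟨⟨fun i => ?_, ?_⟩, fun i _ => ?_⟩, ?_⟩
      · simp only [hw']
        by_cases hi : i ∈ Finset.univ.map f
        · rw [if_pos hi]; exact hw0 _ (g i).2
        · rw [if_neg hi]
      · rw [h2, Finset.sum_coe_sort t w, hw1]
      · simp only [hz']
        by_cases hi : i ∈ Finset.univ.map f
        · rw [if_pos hi]; exact hts (g i).2
        · rw [if_neg hi]; exact hk0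
      · show φ (w', z') = x
        rw [hφdef]
        simp only
        rw [h1, Finset.sum_coe_sort t (fun y => w y • y), hx']
    · rintro x ⟨⟨w, z⟩, ⟨⟨hw0, hw1⟩, hz⟩, rfl⟩
      exact mem_convexHull_of_exists_fintype w z hw0 hw1
        (fun i => hz i (Set.mem_univ i)) rfl
  rw [himg]
  exact hD.image hφ


open Set Filter Bornology

/-- if the zero set of the Minkowski functional of a closed convex set `W`
with `0 ∈ int W` contains no line, then the Minkowski functional is essentially coercive. -/
theorem lusin_stmt_12 {n : ℕ} (W : Set (EuclideanSpace ℝ (Fin n)))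
    (hWc : IsClosed W) (hWconv : Convex ℝ W) (h0 : (0 : EuclideanSpace ℝ (Fin n)) ∈ interior W)
    (hnoline : ∀ (x v : EuclideanSpace ℝ (Fin n)), v ≠ 0 →
      ¬ (∀ t : ℝ, gauge W (x + t • v) = 0)) :
    ∃ ℓ : EuclideanSpace ℝ (Fin n) →ₗ[ℝ] ℝ,
      Tendsto (fun x => gauge W x - ℓ x) (cobounded (EuclideanSpace ℝ (Fin n))) atTop := by
  classical
  have hW0 := mem_interior_iff_mem_nhds.1 h0
  have habs : Absorbent ℝ W := absorbent_nhds_zero hW0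
  have hcont : Continuous (gauge W) := continuous_gauge hWconv hW0
  set K : Set (EuclideanSpace ℝ (Fin n)) := Metric.sphere (0 : EuclideanSpace ℝ (Fin n)) 1 ∩ {x | gauge W x = 0} with hK
  have hKcl : IsClosed K := Metric.isClosed_sphere.inter (isClosed_eq hcont continuous_const)
  have hKcp : IsCompact K :=
    (isCompact_sphere (0 : EuclideanSpace ℝ (Fin n)) 1).of_isClosed_subset hKcl inter_subset_left
  have hC : IsCompact (convexHull ℝ K) := myIsCompactHull hKcp
  have h0C : (0 : EuclideanSpace ℝ (Fin n)) ∉ convexHull ℝ K := by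
    intro hmem
    rw [mem_convexHull_iff_exists_fintype] at hmem
    obtain ⟨ι, _, w, z, hw0, hw1, hzK, hsum⟩ := hmem
    have hex : ∃ i, w i ≠ 0 := by
      by_contra h
      push_neg at h
      simp [h] at hw1
    obtain ⟨i0, hi0⟩ := hex
    have hi0' : 0 < w i0 := lt_of_le_of_ne (hw0 i0) (Ne.symm hi0)
    have herase : ∑ i ∈ Finset.univ.erase i0, w i • z i = -(w i0 • z i0) := by
      have h := Finset.add_sum_erase Finset.univ (fun i => w i • z i) (Finset.mem_univ i0)
      rw [hsum] at h
      exact eq_neg_of_add_eq_zero_right h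
    have hle := myGaugeSumLe hWconv habs (Finset.univ.erase i0) w z (fun i _ => hw0 i)
    rw [herase] at hle
    have hzsum : ∑ i ∈ Finset.univ.erase i0, w i * gauge W (z i) = 0 := by
      refine Finset.sum_eq_zero fun i _ => ?_
      rw [(hzK i).2, mul_zero]
    rw [hzsum] at hle
    have hneg : gauge W (-(z i0)) = 0 := by
      have h1 : gauge W (-(w i0 • z i0)) = w i0 * gauge W (-(z i0)) := by
        rw [← smul_neg, gauge_smul_of_nonneg hi0'.le, smul_eq_mul]
      have h2 : 0 ≤ gauge W (-(w i0 • z i0)) := gauge_nonneg _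
      have h3 : gauge W (-(w i0 • z i0)) = 0 := le_antisymm hle h2
      rw [h1] at h3
      exact (mul_eq_zero.1 h3).resolve_left hi0'.ne'
    have hzne : z i0 ≠ 0 := by
      intro h
      have := (hzK i0).1
      rw [h, mem_sphere_zero_iff_norm, norm_zero] at this
      norm_num at this
    refine hnoline 0 (z i0) hzne fun s => ?_
    rw [zero_add]
    rcases le_total 0 s with hs | hs
    · rw [gauge_smul_of_nonneg hs, (hzK i0).2, smul_zero]
    · have h : s • z i0 = (-s) • (-(z i0)) := by simp
      rw [h, gauge_smul_of_nonneg (neg_nonneg.2 hs), hneg, smul_zero]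
  obtain ⟨ℓ, u, hu0, hub⟩ :=
    geometric_hahn_banach_point_closed (convex_convexHull ℝ K) hC.isClosed h0C
  have hupos : 0 < u := by simpa using hu0
  have hℓK : ∀ x ∈ K, u < ℓ x := fun x hx => hub x (subset_convexHull ℝ K hx)
  set A : Set (EuclideanSpace ℝ (Fin n)) := Metric.sphere (0 : EuclideanSpace ℝ (Fin n)) 1 ∩ {x | ℓ x ≤ u / 2} with hA
  have hAcp : IsCompact A :=
    (isCompact_sphere (0 : EuclideanSpace ℝ (Fin n)) 1).of_isClosed_subset
      (Metric.isClosed_sphere.inter (isClosed_le ℓ.continuous continuous_const))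
      inter_subset_left
  have hAδ : ∃ δ : ℝ, 0 < δ ∧ ∀ x ∈ A, δ ≤ gauge W x := by
    rcases A.eq_empty_or_nonempty with hAe | hAne
    · exact ⟨1, one_pos, fun x hx => by rw [hAe] at hx; exact absurd hx (notMem_empty x)⟩
    · obtain ⟨x0, hx0A, hx0min⟩ := hAcp.exists_isMinOn hAne hcont.continuousOn
      refine ⟨gauge W x0, ?_, fun x hx => hx0min hx⟩
      rcases (gauge_nonneg x0).lt_or_eq with h | h
      · exact h
      · exfalso
        have hx0K : x0 ∈ K := ⟨hx0A.1, h.symm⟩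
        have h1 := hℓK x0 hx0K
        have h2 : ℓ x0 ≤ u / 2 := hx0A.2
        linarith
  obtain ⟨δ, hδpos, hδ⟩ := hAδ
  set t : ℝ := δ / (2 * (‖ℓ‖ + 1)) with ht
  have hℓ1 : (0:ℝ) < ‖ℓ‖ + 1 := by positivity
  have htpos : 0 < t := by positivity
  have ht1 : t * (‖ℓ‖ + 1) = δ / 2 := by
    rw [ht]; field_simp
  set ε : ℝ := min (t * (u / 2)) (δ / 2) with hε
  have hεpos : 0 < ε := lt_min (by positivity) (by positivity)
  have hsphere : ∀ x : EuclideanSpace ℝ (Fin n), ‖x‖ = 1 → ε ≤ gauge W x + t * ℓ x := by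
    intro x hx
    rcases le_or_gt (u / 2) (ℓ x) with h | h
    · have h1 : ε ≤ t * (u / 2) := min_le_left _ _
      have h2 : t * (u / 2) ≤ t * ℓ x := mul_le_mul_of_nonneg_left h htpos.le
      have h3 := gauge_nonneg (s := W) x
      linarith
    · have hxA : x ∈ A := ⟨mem_sphere_zero_iff_norm.2 hx, h.le⟩
      have h1 : δ ≤ gauge W x := hδ x hxA
      have h2 : -‖ℓ‖ ≤ ℓ x := by
        have h := ℓ.le_opNorm x
        rw [hx, mul_one, Real.norm_eq_abs] at h
        exact (abs_le.1 h).1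
      have h3 : t * (-‖ℓ‖) ≤ t * ℓ x := mul_le_mul_of_nonneg_left h2 htpos.le
      have h4 : ε ≤ δ / 2 := min_le_right _ _
      nlinarith
  have hmain : ∀ x : EuclideanSpace ℝ (Fin n), ε * ‖x‖ ≤ gauge W x + t * ℓ x := by
    intro x
    rcases eq_or_ne x 0 with rfl | hx
    · simp [gauge_zero]
    · have hnx : 0 < ‖x‖ := norm_pos_iff.2 hx
      set y : EuclideanSpace ℝ (Fin n) := ‖x‖⁻¹ • x with hy
      have hyn : ‖y‖ = 1 := by
        rw [hy, norm_smul, norm_inv, norm_norm, inv_mul_cancel₀ hnx.ne']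
      have hxy : x = ‖x‖ • y := by
        rw [hy, smul_smul, mul_inv_cancel₀ hnx.ne', one_smul]
      have hs := hsphere y hyn
      have hg : gauge W x = ‖x‖ * gauge W y := by
        conv_lhs => rw [hxy]
        rw [gauge_smul_of_nonneg (norm_nonneg x), smul_eq_mul]
      have hl : ℓ x = ‖x‖ * ℓ y := by
        conv_lhs => rw [hxy]
        rw [map_smul, smul_eq_mul]
      rw [hg, hl]
      nlinarith
  refine ⟨-(t • (ℓ : EuclideanSpace ℝ (Fin n) →ₗ[ℝ] ℝ)), ?_⟩
  have hbound : ∀ x : EuclideanSpace ℝ (Fin n), ε * ‖x‖ ≤ gauge W x - (-(t • (ℓ : EuclideanSpace ℝ (Fin n) →ₗ[ℝ] ℝ))) x := by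
    intro x
    have := hmain x
    simp only [LinearMap.neg_apply, LinearMap.smul_apply, smul_eq_mul,
      ContinuousLinearMap.coe_coe]
    linarith
  exact tendsto_atTop_mono hbound (tendsto_norm_cobounded_atTop.const_mul_atTop hεpos)
end

section
/- Let f : ℝⁿ → ℝ be a convex function. Then for every measurable set A ⊆ ℝⁿ of finite Lebesgue measure and every ε > 0 there exists a convex function g : ℝⁿ → ℝ of class C^{1,1} (g is differentiable with globally Lipschitz gradient) such that 𝓛ⁿ({x ∈ A : f(x) ≠ g(x)}) < ε. -/
open Set MeasureTheory

namespace LusinStmt14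

noncomputable section

variable {n : ℕ}

local notation "E" => EuclideanSpace ℝ (Fin n)

instance : Nonempty {q : ℚ // 0 < q} := ⟨⟨1, one_pos⟩⟩

/-- The infimum of right slopes of a one-dimensional function over positive rationals. -/
noncomputable def rder (φ : ℝ → ℝ) (s : ℝ) : ℝ :=
  ⨅ q : {q : ℚ // 0 < q}, (φ (s + (q : ℝ)) - φ s) / (q : ℝ)

/-- The infimum of right slopes of `F` at `x` in direction `v`. -/
noncomputable def psi (F : E → ℝ) (v x : E) : ℝ := rder (fun t => F (x + t • v)) 0

/-- The set of points admitting a quadratic upper bound with constant `m` in direction `v`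
(rational form, so that the set is closed). -/
def Gset (F : E → ℝ) (v : E) (m : ℕ) : Set (EuclideanSpace ℝ (Fin n)) :=
  ⋂ (q : {q : ℚ // 0 ≤ q}) (q' : {q : ℚ // 0 < q}),
    {x | F (x + (q : ℝ) • v) ≤ F x + (q : ℝ) * ((F (x + (q' : ℝ) • v) - F x) / (q' : ℝ))
      + m * (q : ℝ) ^ 2}

section OneD

variable {φ : ℝ → ℝ} {C : ℝ}

lemma slope_lb (hl : ∀ s t, |φ s - φ t| ≤ C * |s - t|) (s : ℝ) {t : ℝ} (ht : 0 < t) :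
    -C ≤ (φ (s + t) - φ s) / t := by
  rw [le_div_iff₀ ht]
  have h := hl (s + t) s
  have h2 : |s + t - s| = t := by rw [add_sub_cancel_left, abs_of_pos ht]
  rw [h2] at h
  have := neg_abs_le (φ (s + t) - φ s)
  nlinarith [abs_nonneg (φ (s + t) - φ s)]

lemma slope_ub (hl : ∀ s t, |φ s - φ t| ≤ C * |s - t|) (s : ℝ) {t : ℝ} (ht : 0 < t) :
    (φ (s + t) - φ s) / t ≤ C := by
  rw [div_le_iff₀ ht]
  have h := hl (s + t) s
  have h2 : |s + t - s| = t := by rw [add_sub_cancel_left, abs_of_pos ht]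
  rw [h2] at h
  have := le_abs_self (φ (s + t) - φ s)
  linarith

lemma bddBelow_slopes (hl : ∀ s t, |φ s - φ t| ≤ C * |s - t|) (s : ℝ) :
    BddBelow (Set.range fun q : {q : ℚ // 0 < q} => (φ (s + (q : ℝ)) - φ s) / (q : ℝ)) := by
  refine ⟨-C, ?_⟩
  rintro _ ⟨q, rfl⟩
  exact slope_lb hl s (by exact_mod_cast q.2)

lemma rder_le (hl : ∀ s t, |φ s - φ t| ≤ C * |s - t|) (s : ℝ) {q : ℚ} (hq : 0 < q) :
    rder φ s ≤ (φ (s + (q : ℝ)) - φ s) / (q : ℝ) :=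
  ciInf_le (bddBelow_slopes hl s) ⟨q, hq⟩

lemma neg_le_rder (hl : ∀ s t, |φ s - φ t| ≤ C * |s - t|) (s : ℝ) : -C ≤ rder φ s :=
  le_ciInf fun q => slope_lb hl s (by exact_mod_cast q.2)

lemma rder_le_C (hl : ∀ s t, |φ s - φ t| ≤ C * |s - t|) (s : ℝ) : rder φ s ≤ C :=
  (rder_le hl s one_pos).trans (slope_ub hl s (by norm_num))

lemma rder_le_slope (hφ : ConvexOn ℝ univ φ) (hl : ∀ s t, |φ s - φ t| ≤ C * |s - t|)
    (s : ℝ) {t : ℝ} (ht : 0 < t) : rder φ s ≤ (φ (s + t) - φ s) / t := by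
  obtain ⟨q, hq0, hqt⟩ := exists_rat_btwn ht
  have hq0' : (0 : ℚ) < q := by exact_mod_cast hq0
  refine (rder_le hl s hq0').trans ?_
  -- secant_mono : slope from s at s+q ≤ slope from s at s+t
  have := hφ.secant_mono (a := s) (x := s + (q : ℝ)) (y := s + t) (mem_univ _) (mem_univ _)
    (mem_univ _) (by linarith) (by linarith) (by linarith)
  simpa [add_sub_cancel_left] using this

lemma slope_le_rder (hφ : ConvexOn ℝ univ φ) (hl : ∀ s t, |φ s - φ t| ≤ C * |s - t|)
    (s : ℝ) {t : ℝ} (ht : 0 < t) : (φ (s + t) - φ s) / t ≤ rder φ (s + t) := by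
  refine le_ciInf fun q => ?_
  have hq : (0 : ℝ) < (q : ℝ) := by exact_mod_cast q.2
  have := hφ.slope_mono_adjacent (x := s) (y := s + t) (z := s + t + (q : ℝ))
    (mem_univ _) (mem_univ _) (by linarith) (by linarith)
  simpa [add_sub_cancel_left] using this

lemma rder_mono (hφ : ConvexOn ℝ univ φ) (hl : ∀ s t, |φ s - φ t| ≤ C * |s - t|) :
    Monotone (rder φ) := by
  intro s s' hss'
  rcases eq_or_lt_of_le hss' with rfl | h
  · exact le_rfl
  refine le_ciInf fun q => ?_
  have hq : (0 : ℝ) < (q : ℝ) := by exact_mod_cast q.2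
  have h1 : rder φ s ≤ (φ (s + (s' + (q : ℝ) - s)) - φ s) / (s' + (q : ℝ) - s) :=
    rder_le_slope hφ hl s (by linarith)
  rw [add_sub_cancel] at h1
  refine h1.trans ?_
  have := hφ.slope_mono_adjacent (x := s) (y := s') (z := s' + (q : ℝ))
    (mem_univ _) (mem_univ _) h (by linarith)
  -- this : (φ s' - φ s)/(s' - s) ≤ (φ (s'+q) - φ s')/q
  -- need : (φ (s'+q) - φ s)/(s'+q-s) ≤ (φ (s'+q) - φ s')/q
  have h2 := hφ.secant_mono (a := s' + (q : ℝ)) (x := s) (y := s') (mem_univ _) (mem_univ _)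
    (mem_univ _) (by linarith) (by linarith) hss'
  -- h2 : (φ s - φ (s'+q))/(s - (s'+q)) ≤ (φ s' - φ (s'+q))/(s' - (s'+q))
  have e1 : (φ s - φ (s' + (q:ℝ))) / (s - (s' + (q:ℝ))) = (φ (s' + (q:ℝ)) - φ s) / (s' + (q:ℝ) - s) := by
    rw [div_eq_div_iff (by linarith) (by linarith)]; ring
  have e2 : (φ s' - φ (s' + (q:ℝ))) / (s' - (s' + (q:ℝ))) = (φ (s' + (q:ℝ)) - φ s') / (q:ℝ) := by
    rw [div_eq_div_iff (by linarith) (by linarith)]; ring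
  rw [e1, e2] at h2
  exact h2

lemma oneD (hφ : ConvexOn ℝ univ φ) (hC : 0 ≤ C) (hl : ∀ s t, |φ s - φ t| ≤ C * |s - t|) :
    ∀ᵐ s : ℝ, ∃ m : ℕ, ∀ t : ℝ, 0 ≤ t →
      φ (s + t) ≤ φ s + t * rder φ s + m * t ^ 2 := by
  filter_upwards [(rder_mono hφ hl).ae_differentiableAt] with s hs
  have hd : HasDerivAt (rder φ) (deriv (rder φ) s) s := hs.hasDerivAt
  set d := deriv (rder φ) s with hd'
  rw [hasDerivAt_iff_tendsto_slope] at hd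
  have hd2 : Filter.Tendsto (slope (rder φ) s) (nhdsWithin s (Ioi s)) (nhds d) :=
    hd.mono_left (nhdsWithin_mono s fun y hy => ne_of_gt hy)
  have hev : ∀ᶠ y in nhdsWithin s (Ioi s), slope (rder φ) s y < d + 1 :=
    hd2.eventually_lt_const (by linarith)
  obtain ⟨u, hu, hsub⟩ := mem_nhdsGT_iff_exists_Ioc_subset.1 hev
  set r := u - s with hr
  have hr0 : 0 < r := by have : s < u := hu; simp only [hr]; linarith
  have key : ∀ t : ℝ, 0 < t → t ≤ r → rder φ (s + t) - rder φ s ≤ (d + 1) * t := by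
    intro t ht htr
    have hmem : s + t ∈ Ioc s u := ⟨by linarith, by simp [hr] at htr; linarith⟩
    have h0 : slope (rder φ) s (s + t) < d + 1 := hsub hmem
    rw [slope_def_field] at h0
    have h2 : (rder φ (s + t) - rder φ s) / t < d + 1 := by
      simpa [add_sub_cancel_left] using h0
    calc rder φ (s + t) - rder φ s = ((rder φ (s + t) - rder φ s) / t) * t := by
          field_simp
      _ ≤ (d + 1) * t := by nlinarith
  set m : ℕ := ⌈max (d + 1) 0 + 2 * C / r + 1⌉₊ with hm
  refine ⟨m, fun t ht => ?_⟩
  have hmR : max (d + 1) 0 + 2 * C / r + 1 ≤ (m : ℝ) := Nat.le_ceil _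
  have hm1 : d + 1 ≤ (m : ℝ) := by
    have := le_max_left (d + 1) 0
    have h2 : (0:ℝ) ≤ 2 * C / r := by positivity
    linarith
  have hm2 : 2 * C / r ≤ (m : ℝ) := by
    have := le_max_right (d + 1) 0
    linarith
  rcases eq_or_lt_of_le ht with rfl | ht0
  · simp
  rcases le_or_gt t r with htr | htr
  · -- small t
    have h1 : (φ (s + t) - φ s) / t ≤ rder φ (s + t) := slope_le_rder hφ hl s ht0
    have h2 := key t ht0 htr
    have h3 : φ (s + t) - φ s ≤ t * rder φ (s + t) := by
      rw [div_le_iff₀ ht0] at h1; linarith [h1]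
    have h4 : t * rder φ (s + t) ≤ t * (rder φ s + (d + 1) * t) := by
      apply mul_le_mul_of_nonneg_left _ ht; linarith
    have h5 : (d + 1) * t ^ 2 ≤ (m : ℝ) * t ^ 2 := by nlinarith [sq_nonneg t]
    nlinarith
  · -- large t
    have h1 : φ (s + t) - φ s ≤ C * t := by
      have := hl (s + t) s
      have h2 : |s + t - s| = t := by rw [add_sub_cancel_left, abs_of_pos ht0]
      rw [h2] at this
      linarith [le_abs_self (φ (s + t) - φ s)]
    have h2 : -C ≤ rder φ s := neg_le_rder hl s
    have h3 : -(t * rder φ s) ≤ C * t := by nlinarith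
    have h4 : 2 * C * t ≤ (m : ℝ) * t ^ 2 := by
      have h5 : 2 * C / r * t ≤ (m:ℝ) * t := mul_le_mul_of_nonneg_right hm2 ht
      have h6 : 2 * C ≤ 2 * C / r * t := by
        rw [div_mul_eq_mul_div, le_div_iff₀ hr0]
        nlinarith
      nlinarith
    nlinarith

end OneD

lemma null_of_lines {S : Set E} (hS : MeasurableSet S) (v : E)
    (h : ∀ x : E, ∀ᵐ s : ℝ, x + s • v ∉ S) : volume S = 0 := by
  have key : ∀ k : ℕ, volume (S ∩ Metric.ball (0 : E) k) = 0 := by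
    intro k
    set B := S ∩ Metric.ball (0 : E) k with hB'
    have hB : MeasurableSet B := hS.inter Metric.isOpen_ball.measurableSet
    set ν := volume.restrict (Icc (0:ℝ) 1) with hν
    set T : Set (ℝ × E) := (fun p : ℝ × E => p.2 + p.1 • v) ⁻¹' B with hT'
    have hmeas : Measurable (fun p : ℝ × E => p.2 + p.1 • v) :=
      measurable_snd.add (measurable_fst.smul_const v)
    have hT : MeasurableSet T := hmeas hB
    have h1 : (ν.prod volume) T = volume B := by
      rw [Measure.prod_apply hT]
      have hs : ∀ s : ℝ, volume (Prod.mk s ⁻¹' T) = volume B := by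
        intro s
        have he : Prod.mk s ⁻¹' T = (fun x : E => x + s • v) ⁻¹' B := rfl
        rw [he]
        exact (measurePreserving_add_right volume (s • v)).measure_preimage
          hB.nullMeasurableSet
      simp only [hs]
      rw [lintegral_const, hν, Measure.restrict_apply_univ, Real.volume_Icc]
      simp
    have h2 : (ν.prod volume) T = 0 := by
      rw [Measure.prod_apply_symm hT]
      have hx : ∀ x : E, ν ((fun s : ℝ => (s, x)) ⁻¹' T) = 0 := by
        intro x
        have hnull : volume {s : ℝ | x + s • v ∈ S} = 0 := by
          have hx' := h x
          rw [MeasureTheory.ae_iff] at hx'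
          simpa using hx'
        have hsubset : (fun s : ℝ => (s, x)) ⁻¹' T ∩ Icc (0:ℝ) 1 ⊆ {s : ℝ | x + s • v ∈ S} := by
          intro s hs
          exact hs.1.1
        have hm : MeasurableSet ((fun s : ℝ => (s, x)) ⁻¹' T) :=
          (measurable_id.prodMk measurable_const) hT
        rw [hν, Measure.restrict_apply hm]
        exact measure_mono_null hsubset hnull
      simp only [hx]
      exact lintegral_zero
    have : volume B = 0 := by rw [← h1, h2]
    exact this
  have hsub : S ⊆ ⋃ k : ℕ, S ∩ Metric.ball (0 : E) k := by
    intro x hx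
    obtain ⟨k, hk⟩ := exists_nat_gt ‖x‖
    exact mem_iUnion.2 ⟨k, hx, by simpa [Metric.mem_ball] using hk⟩
  exact measure_mono_null hsub (measure_iUnion_null key)

lemma line_convex {F : E → ℝ} (hF : ConvexOn ℝ univ F) (x v : E) :
    ConvexOn ℝ univ (fun t : ℝ => F (x + t • v)) := by
  have h := hF.comp_affineMap (AffineMap.lineMap (x : E) (x + v))
  rw [preimage_univ] at h
  convert h using 1 <;> try rfl
  funext t
  show F (x + t • v) = F (AffineMap.lineMap (x : E) (x + v) t)
  congr 1
  rw [AffineMap.lineMap_apply_module]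
  module

lemma subgrad {F : E → ℝ} (hF : ConvexOn ℝ univ F) {D : E →L[ℝ] ℝ} {x : E}
    (hd : HasFDerivAt F D x) (y : E) : F x + D (y - x) ≤ F y := by
  have h1 : HasDerivAt (fun t : ℝ => x + t • (y - x)) (y - x) 0 := by
    simpa using ((hasDerivAt_id (0:ℝ)).smul_const (y - x)).const_add x
  have h2 : HasFDerivAt F D (x + (0:ℝ) • (y - x)) := by simpa using hd
  have hline : HasDerivAt (fun t : ℝ => F (x + t • (y - x))) (D (y - x)) 0 := by
    exact h2.comp_hasDerivAt 0 h1
  rw [hasDerivAt_iff_tendsto_slope] at hline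
  have h3 : Filter.Tendsto (slope (fun t : ℝ => F (x + t • (y - x))) 0)
      (nhdsWithin 0 (Ioi 0)) (nhds (D (y - x))) :=
    hline.mono_left (nhdsWithin_mono _ fun t ht => ne_of_gt ht)
  have hev : ∀ᶠ t in nhdsWithin (0:ℝ) (Ioi 0),
      slope (fun t : ℝ => F (x + t • (y - x))) 0 t ≤ F y - F x := by
    filter_upwards [Ioc_mem_nhdsGT_of_mem (by constructor <;> norm_num : (0:ℝ) ∈ Ico (0:ℝ) 1)]
      with t ht
    have ht0 : 0 < t := ht.1
    have ht1 : t ≤ 1 := ht.2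
    have hc : F (x + t • (y - x)) ≤ (1 - t) * F x + t * F y := by
      have := hF.2 (mem_univ x) (mem_univ y) (by linarith : (0:ℝ) ≤ 1 - t) (le_of_lt ht0)
        (by ring)
      have he : (1 - t) • x + t • y = x + t • (y - x) := by module
      rw [he] at this
      simpa using this
    rw [slope_def_field]
    rw [div_le_iff₀ (by simpa using ht0)]
    simp only [sub_zero, zero_smul, add_zero]
    nlinarith
  have := le_of_tendsto h3 hev
  linarith

lemma line_lip {F : E → ℝ} {L : ℝ} (hL : 1 ≤ L) (hl : ∀ x y, |F x - F y| ≤ L * ‖x - y‖) (x v : E) :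
    ∀ s t : ℝ, |F (x + s • v) - F (x + t • v)| ≤ (L * (‖v‖ + 1)) * |s - t| := by
  intro s t
  have h1 := hl (x + s • v) (x + t • v)
  have h2 : x + s • v - (x + t • v) = (s - t) • v := by module
  rw [h2, norm_smul] at h1
  have h3 : ‖(s : ℝ) - t‖ = |s - t| := Real.norm_eq_abs _
  rw [h3] at h1
  refine h1.trans ?_
  have : L * (|s - t| * ‖v‖) = (L * ‖v‖) * |s - t| := by ring
  rw [this]
  have hv : L * ‖v‖ ≤ L * (‖v‖ + 1) := by nlinarith [norm_nonneg v]
  exact mul_le_mul_of_nonneg_right hv (abs_nonneg _)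

lemma mem_gset_iff {F : E → ℝ} {v : E} {m : ℕ} {x : E} :
    x ∈ Gset F v m ↔ ∀ (q : ℚ), 0 ≤ q → ∀ (q' : ℚ), 0 < q' →
      F (x + (q : ℝ) • v) ≤ F x + (q : ℝ) * ((F (x + (q' : ℝ) • v) - F x) / (q' : ℝ))
        + m * (q : ℝ) ^ 2 := by
  constructor
  · intro h q hq q' hq'
    exact mem_iInter.1 (mem_iInter.1 h ⟨q, hq⟩) ⟨q', hq'⟩
  · intro h
    exact mem_iInter.2 fun q => mem_iInter.2 fun q' => h q q.2 q' q'.2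

lemma gset_mono {F : E → ℝ} {v : E} {m m' : ℕ} (h : m ≤ m') : Gset F v m ⊆ Gset F v m' := by
  intro x hx
  rw [mem_gset_iff] at hx ⊢
  intro q hq q' hq'
  refine (hx q hq q' hq').trans ?_
  have : (m : ℝ) * (q : ℝ) ^ 2 ≤ (m' : ℝ) * (q : ℝ) ^ 2 := by
    have : (m : ℝ) ≤ m' := by exact_mod_cast h
    nlinarith [sq_nonneg (q : ℝ)]
  linarith

lemma gset_closed {F : E → ℝ} (hcont : Continuous F) (v : E) (m : ℕ) : IsClosed (Gset F v m) := by
  refine isClosed_iInter fun q => isClosed_iInter fun q' => ?_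
  apply isClosed_le
  · exact hcont.comp (continuous_id.add continuous_const)
  · refine (hcont.add ?_).add continuous_const
    exact (continuous_const.mul (((hcont.comp (continuous_id.add continuous_const)).sub
      hcont).div_const _))

lemma psi_slopes {F : E → ℝ} (v x : E) :
    psi F v x = ⨅ q : {q : ℚ // 0 < q}, (F (x + (q : ℝ) • v) - F x) / (q : ℝ) := by
  unfold psi rder
  congr 1
  funext q
  norm_num

lemma psi_le_slope {F : E → ℝ} {L : ℝ} (hL : 1 ≤ L) (hl : ∀ x y, |F x - F y| ≤ L * ‖x - y‖) (v x : E)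
    {q : ℚ} (hq : 0 < q) : psi F v x ≤ (F (x + (q : ℝ) • v) - F x) / (q : ℝ) := by
  have := rder_le (line_lip hL hl x v) 0 hq
  unfold psi
  refine this.trans ?_
  norm_num

lemma gset_real {F : E → ℝ} {L : ℝ} (hcont : Continuous F) (hL : 1 ≤ L)
    (hl : ∀ x y, |F x - F y| ≤ L * ‖x - y‖) {v x : E} {m : ℕ} (hx : x ∈ Gset F v m) :
    ∀ t : ℝ, 0 ≤ t → F (x + t • v) ≤ F x + t * psi F v x + m * t ^ 2 := by
  have hrat : ∀ q : ℚ, 0 ≤ q → F (x + (q : ℝ) • v) ≤ F x + q * psi F v x + m * (q : ℝ) ^ 2 := by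
    intro q hq
    rcases eq_or_lt_of_le hq with rfl | hq0
    · simp
    have hq0' : (0 : ℝ) < (q : ℝ) := by exact_mod_cast hq0
    have key : (F (x + (q : ℝ) • v) - F x - m * (q : ℝ) ^ 2) / (q : ℝ) ≤ psi F v x := by
      rw [psi_slopes]
      refine le_ciInf fun q' => ?_
      have h1 := (mem_gset_iff.1 hx) q hq q' q'.2
      rw [div_le_iff₀ hq0']
      linarith [h1]
    rw [div_le_iff₀ hq0'] at key
    linarith
  intro t ht
  have hclosed : IsClosed {t : ℝ | F (x + t • v) ≤ F x + t * psi F v x + m * t ^ 2} := by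
    apply isClosed_le
    · exact hcont.comp (continuous_const.add (continuous_id.smul continuous_const))
    · refine (continuous_const.add (continuous_id.mul continuous_const)).add ?_
      exact continuous_const.mul (continuous_pow 2)
  have hmem : t ∈ closure ((fun q : ℚ => (q : ℝ)) '' {q : ℚ | 0 ≤ q}) := by
    rw [Metric.mem_closure_iff]
    intro δ hδ
    obtain ⟨q, hq1, hq2⟩ := exists_rat_btwn (lt_add_of_pos_right t hδ)
    refine ⟨(q : ℝ), ⟨q, ?_, rfl⟩, ?_⟩
    · have : (0:ℝ) ≤ (q:ℝ) := le_of_lt (lt_of_le_of_lt ht hq1)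
      exact_mod_cast this
    · rw [Real.dist_eq, abs_sub_lt_iff]
      constructor <;> linarith
  have hsub : ((fun q : ℚ => (q : ℝ)) '' {q : ℚ | 0 ≤ q}) ⊆
      {t : ℝ | F (x + t • v) ≤ F x + t * psi F v x + m * t ^ 2} := by
    rintro _ ⟨q, hq, rfl⟩
    exact hrat q hq
  exact (hclosed.closure_subset_iff.2 hsub) hmem

lemma psi_eq_fderiv {F : E → ℝ} {L : ℝ} (hF : ConvexOn ℝ univ F) (hL : 1 ≤ L)
    (hl : ∀ x y, |F x - F y| ≤ L * ‖x - y‖) {D : E →L[ℝ] ℝ} {x : E}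
    (hd : HasFDerivAt F D x) (v : E) : psi F v x = D v := by
  have hge : D v ≤ psi F v x := by
    rw [psi_slopes]
    refine le_ciInf fun q => ?_
    have hq : (0 : ℝ) < (q : ℝ) := by exact_mod_cast q.2
    have h1 := subgrad hF hd (x + (q : ℝ) • v)
    rw [add_sub_cancel_left, D.map_smul] at h1
    rw [le_div_iff₀ hq]
    rw [smul_eq_mul] at h1
    nlinarith [h1]
  have hle : psi F v x ≤ D v := by
    refine le_of_forall_pos_le_add fun δ hδ => ?_
    have h1 : HasDerivAt (fun t : ℝ => x + t • v) v 0 := by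
      simpa using ((hasDerivAt_id (0:ℝ)).smul_const v).const_add x
    have h2 : HasFDerivAt F D (x + (0:ℝ) • v) := by simpa using hd
    have hline : HasDerivAt (fun t : ℝ => F (x + t • v)) (D v) 0 := by
      exact h2.comp_hasDerivAt 0 h1
    rw [hasDerivAt_iff_tendsto_slope] at hline
    have h3 : Filter.Tendsto (slope (fun t : ℝ => F (x + t • v)) 0)
        (nhdsWithin 0 (Ioi 0)) (nhds (D v)) :=
      hline.mono_left (nhdsWithin_mono _ fun t ht => ne_of_gt ht)
    have hev : ∀ᶠ t in nhdsWithin (0:ℝ) (Ioi 0),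
        slope (fun t : ℝ => F (x + t • v)) 0 t < D v + δ :=
      h3.eventually_lt_const (by linarith)
    obtain ⟨u, hu, hsubs⟩ := mem_nhdsGT_iff_exists_Ioc_subset.1 hev
    obtain ⟨q, hq0, hqu⟩ := exists_rat_btwn (mem_Ioi.1 hu : (0:ℝ) < u)
    have hq0' : (0 : ℚ) < q := by exact_mod_cast hq0
    have hmem : (q : ℝ) ∈ Ioc (0:ℝ) u := ⟨hq0, le_of_lt hqu⟩
    have hs : slope (fun t : ℝ => F (x + t • v)) 0 (q : ℝ) < D v + δ := hsubs hmem
    rw [slope_def_field] at hs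
    have : (F (x + (q:ℝ) • v) - F x) / (q : ℝ) < D v + δ := by
      simpa using hs
    exact le_of_lt (lt_of_le_of_lt (psi_le_slope hL hl v x hq0') this)
  linarith

lemma ae_mem_gset {F : E → ℝ} {L : ℝ} (hF : ConvexOn ℝ univ F) (hcont : Continuous F) (hL : 1 ≤ L)
    (hl : ∀ x y, |F x - F y| ≤ L * ‖x - y‖) (v : E) :
    ∀ᵐ x : E, x ∈ ⋃ m : ℕ, Gset F v m := by
  have hU : MeasurableSet (⋃ m : ℕ, Gset F v m) :=
    MeasurableSet.iUnion fun m => (gset_closed hcont v m).measurableSet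
  rw [MeasureTheory.ae_iff]
  have hcompl : {x : E | ¬ x ∈ ⋃ m : ℕ, Gset F v m} = (⋃ m : ℕ, Gset F v m)ᶜ := rfl
  rw [hcompl]
  apply null_of_lines hU.compl v
  intro x
  have hφ : ConvexOn ℝ univ (fun t : ℝ => F (x + t • v)) := line_convex hF x v
  have hC : (0:ℝ) ≤ L * (‖v‖ + 1) := by nlinarith [norm_nonneg v]
  filter_upwards [oneD hφ hC (line_lip hL hl x v)] with s hs
  obtain ⟨m, hm⟩ := hs
  rw [notMem_compl_iff]
  refine mem_iUnion.2 ⟨m, mem_gset_iff.2 fun q hq q' hq' => ?_⟩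
  have hq'' : (0:ℝ) ≤ (q : ℝ) := by exact_mod_cast hq
  have h1 := hm (q : ℝ) hq''
  have h2 : rder (fun t : ℝ => F (x + t • v)) s ≤
      (F (x + s • v + (q' : ℝ) • v) - F (x + s • v)) / (q' : ℝ) := by
    have hrl := rder_le (line_lip hL hl x v) s hq'
    refine hrl.trans ?_
    have he : x + (s + (q' : ℝ)) • v = x + s • v + (q' : ℝ) • v := by module
    rw [he]
  have he2 : x + (s + (q : ℝ)) • v = x + s • v + (q : ℝ) • v := by module
  rw [he2] at h1
  have h3 : (q : ℝ) * rder (fun t : ℝ => F (x + t • v)) s ≤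
      (q : ℝ) * ((F (x + s • v + (q' : ℝ) • v) - F (x + s • v)) / (q' : ℝ)) :=
    mul_le_mul_of_nonneg_left h2 hq''
  linarith


lemma convex_combo {f : E → ℝ} (hf : ConvexOn ℝ univ f) (x y : E) {a b : ℝ}
    (ha : 0 ≤ a) (hb : 0 ≤ b) (hab : a + b = 1) :
    f (a • x + b • y) ≤ a * f x + b * f y := by
  have h := hf.2 (mem_univ x) (mem_univ y) ha hb hab
  simpa [smul_eq_mul] using h

lemma coord_abs_le_norm (u : E) (j : Fin n) : |u j| ≤ ‖u‖ := by
  have h1 : |u j| ^ 2 ≤ ∑ i : Fin n, ‖u i‖ ^ 2 := by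
    have h := Finset.single_le_sum (f := fun i : Fin n => ‖u i‖ ^ 2)
      (fun i _ => sq_nonneg _) (Finset.mem_univ j)
    simpa [Real.norm_eq_abs, sq_abs] using h
  rw [EuclideanSpace.norm_eq]
  calc |u j| = Real.sqrt (|u j| ^ 2) := by rw [Real.sqrt_sq_eq_abs, abs_abs]
    _ ≤ Real.sqrt (∑ i : Fin n, ‖u i‖ ^ 2) := Real.sqrt_le_sqrt h1

lemma sum_sq_coords (u : E) : ∑ j : Fin n, u j ^ 2 = ‖u‖ ^ 2 := by
  rw [EuclideanSpace.norm_eq, Real.sq_sqrt (by positivity)]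
  congr 1
  funext j
  rw [Real.norm_eq_abs, sq_abs]

lemma sum_coord_smul_single (u : E) :
    ∑ j : Fin n, u j • EuclideanSpace.single j (1 : ℝ) = u := by
  ext k
  have hsa : (∑ j : Fin n, u j • EuclideanSpace.single j (1 : ℝ)) k
      = ∑ j : Fin n, (u j • EuclideanSpace.single j (1 : ℝ)) k :=
    by rw [WithLp.ofLp_sum, Finset.sum_apply]
  rw [hsa]
  simp only [PiLp.smul_apply, EuclideanSpace.single_apply, smul_eq_mul, mul_ite, mul_one, mul_zero]
  simp

lemma jensen_coords {F : E → ℝ} (hF : ConvexOn ℝ univ F) (hn : 0 < n) (x u : E) :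
    F (x + u) ≤ ∑ j : Fin n, (1 / (n : ℝ)) * F (x + ((n : ℝ) * u j) • EuclideanSpace.single j (1:ℝ)) := by
  have hn' : (0:ℝ) < n := by exact_mod_cast hn
  set w : Fin n → ℝ := fun _ => 1 / (n : ℝ) with hw
  set pts : Fin n → E := fun j => x + ((n : ℝ) * u j) • EuclideanSpace.single j (1:ℝ) with hpts
  have hwsum : ∑ j : Fin n, w j = 1 := by
    simp only [hw, Finset.sum_const, Finset.card_univ, Fintype.card_fin, nsmul_eq_mul]
    field_simp
  have hjen := hF.map_sum_le (t := Finset.univ) (w := w) (p := pts)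
    (fun i _ => by positivity) hwsum (fun i _ => mem_univ _)
  have hptsum : ∑ j : Fin n, w j • pts j = x + u := by
    have hterm : ∀ j : Fin n, w j • pts j
        = (1/(n:ℝ)) • x + u j • EuclideanSpace.single j (1:ℝ) := by
      intro j
      rw [hpts, hw, smul_add, smul_smul]
      congr 2
      field_simp
    rw [Finset.sum_congr rfl fun j _ => hterm j, Finset.sum_add_distrib, ← Finset.sum_smul,
      sum_coord_smul_single]
    have hwsum' : ∑ _j : Fin n, (1:ℝ)/(n:ℝ) = 1 := hwsum
    rw [hwsum', one_smul]
  rw [hptsum] at hjen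
  refine hjen.trans ?_
  apply le_of_eq
  apply Finset.sum_congr rfl
  intro j _
  rw [smul_eq_mul]

lemma quad_upper {F : E → ℝ} (hF : ConvexOn ℝ univ F) (hcont : Continuous F) {L : ℝ}
    (hL : 1 ≤ L) (hl : ∀ x y, |F x - F y| ≤ L * ‖x - y‖) {D : E →L[ℝ] ℝ} {x : E}
    (hd : HasFDerivAt F D x) {m : ℕ}
    (hg : ∀ j : Fin n, x ∈ Gset F (EuclideanSpace.single j (1:ℝ)) m ∧
      x ∈ Gset F (-EuclideanSpace.single j (1:ℝ)) m) :
    ∀ y : E, F y ≤ F x + D (y - x) + (n * m : ℝ) * ‖y - x‖ ^ 2 := by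
  intro y
  rcases Nat.eq_zero_or_pos n with hn | hn
  · subst hn
    haveI : Subsingleton (EuclideanSpace ℝ (Fin 0)) := ⟨fun a b => by ext i; exact i.elim0⟩
    have hxy : y = x := Subsingleton.elim y x
    subst hxy
    simp
  have hn' : (0:ℝ) < n := by exact_mod_cast hn
  set u : E := y - x with hu
  have hyx : x + u = y := by rw [hu]; abel
  have hjen := jensen_coords hF hn x u
  rw [hyx] at hjen
  refine hjen.trans ?_
  have hpt : ∀ j : Fin n, F (x + ((n:ℝ) * u j) • EuclideanSpace.single j (1:ℝ))
      ≤ F x + ((n:ℝ) * u j) * D (EuclideanSpace.single j (1:ℝ)) + m * ((n:ℝ) * u j)^2 := by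
    intro j
    rcases le_or_gt 0 (u j) with h | h
    · have h2 := gset_real hcont hL hl (hg j).1 ((n:ℝ) * u j) (by positivity)
      rwa [psi_eq_fderiv hF hL hl hd] at h2
    · have h2 := gset_real hcont hL hl (hg j).2 (-((n:ℝ) * u j)) (by nlinarith)
      rw [psi_eq_fderiv hF hL hl hd] at h2
      have he : x + -((n:ℝ) * u j) • -EuclideanSpace.single j (1:ℝ)
          = x + ((n:ℝ) * u j) • EuclideanSpace.single j (1:ℝ) := by module
      rw [he, map_neg] at h2
      calc F (x + ((n:ℝ) * u j) • EuclideanSpace.single j (1:ℝ))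
          ≤ F x + (-((n:ℝ)*u j)) * (-(D (EuclideanSpace.single j (1:ℝ))))
            + m * (-((n:ℝ)*u j))^2 := h2
        _ = F x + ((n:ℝ)*u j) * D (EuclideanSpace.single j (1:ℝ)) + m * ((n:ℝ)*u j)^2 := by
            ring
  have hsum2 : ∑ j : Fin n, (1/(n:ℝ)) * F (x + ((n:ℝ) * u j) • EuclideanSpace.single j (1:ℝ))
      ≤ ∑ j : Fin n, (1/(n:ℝ)) * (F x + ((n:ℝ) * u j) * D (EuclideanSpace.single j (1:ℝ))
        + m * ((n:ℝ) * u j)^2) := by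
    refine Finset.sum_le_sum fun j _ => ?_
    exact mul_le_mul_of_nonneg_left (hpt j) (by positivity)
  refine hsum2.trans ?_
  have hterm : ∀ j : Fin n, (1/(n:ℝ)) * (F x + ((n:ℝ) * u j) * D (EuclideanSpace.single j (1:ℝ))
      + m * ((n:ℝ) * u j)^2)
      = (1/(n:ℝ)) * F x + u j * D (EuclideanSpace.single j (1:ℝ)) + ((n:ℝ) * m) * (u j)^2 := by
    intro j
    field_simp
  rw [Finset.sum_congr rfl fun j _ => hterm j]
  rw [Finset.sum_add_distrib, Finset.sum_add_distrib]
  have h1 : ∑ _j : Fin n, (1/(n:ℝ)) * F x = F x := by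
    rw [Finset.sum_const, Finset.card_univ, Fintype.card_fin, nsmul_eq_mul]
    field_simp
  have h2 : ∑ j : Fin n, u j * D (EuclideanSpace.single j (1:ℝ)) = D u := by
    conv_rhs => rw [← sum_coord_smul_single u]
    rw [map_sum]
    apply Finset.sum_congr rfl
    intro j _
    rw [D.map_smul, smul_eq_mul]
  have h3 : ∑ j : Fin n, ((n:ℝ) * m) * (u j)^2 = ((n:ℝ) * m) * ‖u‖^2 := by
    rw [← Finset.mul_sum, sum_sq_coords]
  rw [h1, h2, h3]

set_option maxHeartbeats 2000000 in
lemma truncation {f : E → ℝ} (hf : ConvexOn ℝ univ f) (R : ℝ) (hR : 1 ≤ R) :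
    ∃ (L : ℝ) (F : E → ℝ), 1 ≤ L ∧ ConvexOn ℝ univ F ∧
      (∀ x y, |F x - F y| ≤ L * ‖x - y‖) ∧
      (∀ x ∈ Metric.closedBall (0 : E) R, F x = f x) ∧
      (∀ y, f 0 - L * ‖y‖ ≤ F y) := by
  set c : ℝ := (n : ℝ) * (R + 1) with hc
  set M : ℝ := (∑ j : Fin n, (|f ((c : ℝ) • EuclideanSpace.single j (1:ℝ))|
    + |f ((-c) • EuclideanSpace.single j (1:ℝ))|)) + |f 0| with hM
  have hub : ∀ x ∈ Metric.closedBall (0:E) (R+1), f x ≤ M := by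
    intro x hx
    have hxn : ‖x‖ ≤ R + 1 := by simpa [dist_zero_right] using hx
    rcases Nat.eq_zero_or_pos n with hn | hn
    · subst hn
      haveI : Subsingleton (EuclideanSpace ℝ (Fin 0)) := ⟨fun a b => by ext i; exact i.elim0⟩
      have hx0 : x = 0 := Subsingleton.elim x 0
      rw [hx0, hM]
      simp [le_abs_self]
    have hn' : (0:ℝ) < n := by exact_mod_cast hn
    have hjen := jensen_coords hf hn 0 x
    rw [zero_add] at hjen
    refine hjen.trans ?_
    have hpt : ∀ j : Fin n, f ((0:E) + ((n:ℝ) * x j) • EuclideanSpace.single j (1:ℝ))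
        ≤ |f ((c : ℝ) • EuclideanSpace.single j (1:ℝ))|
          + |f ((-c) • EuclideanSpace.single j (1:ℝ))| := by
      intro j
      set s : ℝ := (n:ℝ) * x j with hs
      have hc0 : 0 < c := by rw [hc]; positivity
      have hsc : |s| ≤ c := by
        rw [hs, hc, abs_mul]
        rw [Nat.abs_cast]
        apply mul_le_mul_of_nonneg_left _ (le_of_lt hn')
        exact (coord_abs_le_norm x j).trans hxn
      set θ : ℝ := (s + c) / (2*c) with hθ
      have hθ0 : 0 ≤ θ := by
        rw [hθ]
        apply div_nonneg _ (by linarith)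
        have := neg_abs_le s
        linarith [hsc, abs_le.1 hsc]
      have hθ1 : θ ≤ 1 := by
        rw [hθ, div_le_one (by linarith)]
        linarith [abs_le.1 hsc]
      have hrep : θ • ((c : ℝ) • EuclideanSpace.single j (1:ℝ))
          + (1 - θ) • ((-c) • EuclideanSpace.single j (1:ℝ))
          = (0:E) + s • EuclideanSpace.single j (1:ℝ) := by
        have hsc' : θ * c + (1 - θ) * (-c) = s := by
          have h1 : θ * (2 * c) = s + c := by
            rw [hθ, div_mul_cancel₀ _ (by positivity : (2:ℝ) * c ≠ 0)]
          linear_combination h1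
        calc θ • ((c : ℝ) • EuclideanSpace.single j (1:ℝ))
            + (1 - θ) • ((-c) • EuclideanSpace.single j (1:ℝ))
            = (θ * c + (1 - θ) * (-c)) • EuclideanSpace.single j (1:ℝ) := by module
          _ = (0:E) + s • EuclideanSpace.single j (1:ℝ) := by rw [hsc', zero_add]
      have hcv := convex_combo hf ((c : ℝ) • EuclideanSpace.single j (1:ℝ))
        ((-c) • EuclideanSpace.single j (1:ℝ)) (a := θ) (b := 1 - θ)
        hθ0 (by linarith) (by ring)
      rw [hrep] at hcv
      refine hcv.trans ?_
      have ha1 : f ((c : ℝ) • EuclideanSpace.single j (1:ℝ))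
          ≤ |f ((c : ℝ) • EuclideanSpace.single j (1:ℝ))| := le_abs_self _
      have ha2 : f ((-c) • EuclideanSpace.single j (1:ℝ))
          ≤ |f ((-c) • EuclideanSpace.single j (1:ℝ))| := le_abs_self _
      nlinarith [abs_nonneg (f ((c : ℝ) • EuclideanSpace.single j (1:ℝ))),
        abs_nonneg (f ((-c) • EuclideanSpace.single j (1:ℝ)))]
    calc ∑ j : Fin n, (1/(n:ℝ)) * f ((0:E) + ((n:ℝ) * x j) • EuclideanSpace.single j (1:ℝ))
        ≤ ∑ j : Fin n, (1/(n:ℝ)) * (|f ((c : ℝ) • EuclideanSpace.single j (1:ℝ))|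
          + |f ((-c) • EuclideanSpace.single j (1:ℝ))|) :=
          Finset.sum_le_sum fun j _ => mul_le_mul_of_nonneg_left (hpt j) (by positivity)
      _ ≤ ∑ j : Fin n, (|f ((c : ℝ) • EuclideanSpace.single j (1:ℝ))|
          + |f ((-c) • EuclideanSpace.single j (1:ℝ))|) := by
          refine Finset.sum_le_sum fun j _ => ?_
          have hpos : (0:ℝ) ≤ |f ((c : ℝ) • EuclideanSpace.single j (1:ℝ))|
            + |f ((-c) • EuclideanSpace.single j (1:ℝ))| := by positivity
          have h1n : (1:ℝ)/(n:ℝ) ≤ 1 := by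
            rw [div_le_one hn']
            exact_mod_cast hn
          nlinarith
      _ ≤ M := by rw [hM]; simp [le_abs_self, abs_nonneg]
  have h0ball : (0:E) ∈ Metric.closedBall (0:E) (R+1) := by
    simp [Metric.mem_closedBall]; linarith
  have hf0M : f 0 ≤ M := hub 0 h0ball
  have hlb : ∀ x ∈ Metric.closedBall (0:E) (R+1), 2 * f 0 - M ≤ f x := by
    intro x hx
    have hmx : -x ∈ Metric.closedBall (0:E) (R+1) := by
      simpa [Metric.mem_closedBall, dist_zero_right] using hx
    have h1 : f 0 ≤ (1/2) * f x + (1/2) * f (-x) := by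
      have hcv := convex_combo hf x (-x) (a := 1/2) (b := 1/2)
        (by norm_num : (0:ℝ) ≤ 1/2) (by norm_num : (0:ℝ) ≤ 1/2) (by norm_num)
      have he : (1/2 : ℝ) • x + (1/2 : ℝ) • (-x) = (0:E) := by module
      rw [he] at hcv
      exact hcv
    have h2 := hub (-x) hmx
    linarith
  set L : ℝ := 2 * (M - f 0) + 1 with hLdef
  have hL1 : 1 ≤ L := by rw [hLdef]; linarith
  have hslope : ∀ x ∈ Metric.closedBall (0:E) R, ∀ y, f x - f y ≤ L * ‖x - y‖ := by
    intro x hx y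
    have hxR : ‖x‖ ≤ R := by simpa [dist_zero_right] using hx
    rcases eq_or_ne x y with rfl | hxy
    · simp
    set d : ℝ := ‖x - y‖ with hd
    have hd0 : 0 < d := by rw [hd]; exact norm_sub_pos_iff.2 hxy
    have hd' : d ≠ 0 := ne_of_gt hd0
    have h1d : (0:ℝ) < 1 + d := by linarith
    set z : E := x + d⁻¹ • (x - y) with hz
    have hzb : z ∈ Metric.closedBall (0:E) (R+1) := by
      rw [Metric.mem_closedBall, dist_zero_right]
      calc ‖z‖ ≤ ‖x‖ + ‖d⁻¹ • (x - y)‖ := by rw [hz]; exact norm_add_le _ _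
        _ = ‖x‖ + 1 := by
            rw [norm_smul, Real.norm_eq_abs, abs_of_pos (inv_pos.2 hd0), ← hd]
            field_simp
        _ ≤ R + 1 := by linarith
    have hxb : x ∈ Metric.closedBall (0:E) (R+1) := by
      rw [Metric.mem_closedBall, dist_zero_right]; linarith
    set α : ℝ := d / (1 + d) with hα
    have hα0 : 0 ≤ α := by positivity
    have hα1 : α < 1 := by rw [hα, div_lt_one h1d]; linarith
    have hrep : α • z + (1 - α) • y = x := by
      have hs1 : α + α * d⁻¹ = 1 := by rw [hα]; field_simp; ring
      have hs2 : (1 - α) - α * d⁻¹ = 0 := by linarith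
      calc α • z + (1 - α) • y = (α + α * d⁻¹) • x + ((1 - α) - α * d⁻¹) • y := by
            rw [hz]; module
        _ = x := by rw [hs1, hs2]; simp
    have hconv := convex_combo hf z y (a := α) (b := 1 - α) hα0 (by linarith) (by ring)
    rw [hrep] at hconv
    have hzM := hub z hzb
    have hxm := hlb x hxb
    have hαd : α = d * (1 - α) := by
      rw [hα]; field_simp; ring
    have key : (1 - α) * (f x - f y) ≤ α * (f z - f x) := by nlinarith
    have key2 : (1 - α) * (f x - f y) ≤ d * (1 - α) * (f z - f x) := by
      rw [← hαd]; exact key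
    have h1α : 0 < 1 - α := by linarith
    have key3 : f x - f y ≤ d * (f z - f x) := by
      have key2' : (1 - α) * (f x - f y) ≤ (1 - α) * (d * (f z - f x)) := by
        calc (1 - α) * (f x - f y) ≤ d * (1 - α) * (f z - f x) := key2
          _ = (1 - α) * (d * (f z - f x)) := by ring
      exact le_of_mul_le_mul_left key2' h1α
    calc f x - f y ≤ d * (f z - f x) := key3
      _ ≤ d * L := by
          apply mul_le_mul_of_nonneg_left _ (le_of_lt hd0)
          rw [hLdef]; linarith
      _ = L * ‖x - y‖ := by rw [hd]; ring
  have hflb : ∀ y, f 0 - L * ‖y‖ ≤ f y := by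
    intro y
    have h0b : (0:E) ∈ Metric.closedBall (0:E) R := by
      simp [Metric.mem_closedBall]; linarith
    have := hslope 0 h0b y
    rw [zero_sub, norm_neg] at this
    linarith
  set F : E → ℝ := fun x => sInf (range fun y : E => f y + L * ‖x - y‖) with hFdef
  have hlow : ∀ x y : E, f 0 - L * ‖x‖ ≤ f y + L * ‖x - y‖ := by
    intro x y
    have h1 := hflb y
    have h2 : ‖y‖ ≤ ‖x‖ + ‖x - y‖ := by
      calc ‖y‖ = ‖x - (x - y)‖ := by congr 1; abel
        _ ≤ ‖x‖ + ‖x - y‖ := norm_sub_le _ _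
    nlinarith
  have hbdd : ∀ x : E, BddBelow (range fun y : E => f y + L * ‖x - y‖) := by
    intro x
    refine ⟨f 0 - L * ‖x‖, ?_⟩
    rintro _ ⟨y, rfl⟩
    exact hlow x y
  have hFle : ∀ x, F x ≤ f x := by
    intro x
    have := csInf_le (hbdd x) ⟨x, rfl⟩
    simpa using this
  have hFge : ∀ x ∈ Metric.closedBall (0:E) R, f x ≤ F x := by
    intro x hx
    refine le_csInf (range_nonempty _) ?_
    rintro _ ⟨y, rfl⟩
    show f x ≤ f y + L * ‖x - y‖
    have := hslope x hx y
    linarith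
  have hFlip1 : ∀ x y, F x - F y ≤ L * ‖x - y‖ := by
    intro x y
    have step : ∀ y' : E, F x - L * ‖x - y‖ ≤ f y' + L * ‖y - y'‖ := by
      intro y'
      have h1 : F x ≤ f y' + L * ‖x - y'‖ := csInf_le (hbdd x) ⟨y', rfl⟩
      have h2 : ‖x - y'‖ ≤ ‖x - y‖ + ‖y - y'‖ := by
        calc ‖x - y'‖ = ‖(x - y) + (y - y')‖ := by congr 1; abel
          _ ≤ ‖x - y‖ + ‖y - y'‖ := norm_add_le _ _
      nlinarith
    have := le_csInf (range_nonempty _) (by rintro _ ⟨y', rfl⟩; exact step y')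
    linarith
  have hFabs : ∀ x y, |F x - F y| ≤ L * ‖x - y‖ := by
    intro x y
    rw [abs_sub_le_iff]
    refine ⟨hFlip1 x y, ?_⟩
    have := hFlip1 y x
    rwa [norm_sub_rev] at this
  have hFconv : ConvexOn ℝ univ F := by
    refine ⟨convex_univ, ?_⟩
    intro x1 _ x2 _ a b ha hb hab
    refine le_of_forall_pos_le_add fun δ hδ => ?_
    obtain ⟨_, ⟨y1, rfl⟩, hlt1⟩ := exists_lt_of_csInf_lt (range_nonempty _)
      (lt_add_of_pos_right (F x1) hδ)
    obtain ⟨_, ⟨y2, rfl⟩, hlt2⟩ := exists_lt_of_csInf_lt (range_nonempty _)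
      (lt_add_of_pos_right (F x2) hδ)
    have hcomb : F (a • x1 + b • x2) ≤ f (a • y1 + b • y2)
        + L * ‖(a • x1 + b • x2) - (a • y1 + b • y2)‖ := csInf_le (hbdd _) ⟨a • y1 + b • y2, rfl⟩
    have hfc : f (a • y1 + b • y2) ≤ a * f y1 + b * f y2 :=
      hf.2 (mem_univ y1) (mem_univ y2) ha hb hab
    have hnorm : ‖(a • x1 + b • x2) - (a • y1 + b • y2)‖ ≤ a * ‖x1 - y1‖ + b * ‖x2 - y2‖ := by
      have he : (a • x1 + b • x2) - (a • y1 + b • y2) = a • (x1 - y1) + b • (x2 - y2) := by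
        module
      rw [he]
      refine (norm_add_le _ _).trans ?_
      rw [norm_smul, norm_smul, Real.norm_eq_abs, Real.norm_eq_abs,
        abs_of_nonneg ha, abs_of_nonneg hb]
    have hL0 : (0:ℝ) < L := by linarith
    have hp1 : a * (f y1 + L * ‖x1 - y1‖) ≤ a * (F x1 + δ) :=
      mul_le_mul_of_nonneg_left (le_of_lt hlt1) ha
    have hp2 : b * (f y2 + L * ‖x2 - y2‖) ≤ b * (F x2 + δ) :=
      mul_le_mul_of_nonneg_left (le_of_lt hlt2) hb
    have hLn : L * ‖(a • x1 + b • x2) - (a • y1 + b • y2)‖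
        ≤ L * (a * ‖x1 - y1‖ + b * ‖x2 - y2‖) :=
      mul_le_mul_of_nonneg_left hnorm (le_of_lt hL0)
    calc F (a • x1 + b • x2) ≤ f (a • y1 + b • y2)
        + L * ‖(a • x1 + b • x2) - (a • y1 + b • y2)‖ := hcomb
      _ ≤ a * f y1 + b * f y2 + L * (a * ‖x1 - y1‖ + b * ‖x2 - y2‖) := by linarith
      _ = a * (f y1 + L * ‖x1 - y1‖) + b * (f y2 + L * ‖x2 - y2‖) := by ring
      _ ≤ a * (F x1 + δ) + b * (F x2 + δ) := by linarith
      _ = a * F x1 + b * F x2 + δ := by linear_combination δ * hab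
  refine ⟨L, F, hL1, hFconv, hFabs, fun x hx => le_antisymm (hFle x) (hFge x hx), fun y => ?_⟩
  exact le_csInf (range_nonempty _) (by rintro _ ⟨y', rfl⟩; exact hlow y y')


lemma sq_norm_combo {u w : E} {s t : ℝ} (hs : 0 ≤ s) (ht : 0 ≤ t) (hst : s + t = 1) :
    ‖s • u + t • w‖^2 ≤ s * ‖u‖^2 + t * ‖w‖^2 := by
  have hexp : ‖s • u + t • w‖^2
      = s^2*‖u‖^2 + 2*(s*t)*(inner ℝ u w : ℝ) + t^2*‖w‖^2 := by
    rw [norm_add_sq_real, norm_smul, norm_smul, real_inner_smul_left, real_inner_smul_right,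
      Real.norm_eq_abs, Real.norm_eq_abs, abs_of_nonneg hs, abs_of_nonneg ht]
    ring
  rw [hexp]
  have hcs := real_inner_le_norm u w
  nlinarith [mul_nonneg hs ht, sq_nonneg (‖u‖ - ‖w‖),
    mul_le_mul_of_nonneg_left hcs (mul_nonneg hs ht)]

set_option maxHeartbeats 2000000 in
set_option synthInstance.maxHeartbeats 400000 in
lemma smooth_touch {F : E → ℝ} (hF : ConvexOn ℝ univ F) {L : ℝ} (hL : 1 ≤ L)
    (hl : ∀ x y, |F x - F y| ≤ L * ‖x - y‖) {c₀ : ℝ} (hlb : ∀ y, c₀ - L * ‖y‖ ≤ F y)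
    {a : ℝ} (ha : 1 ≤ a) :
    ∃ g : E → ℝ, ConvexOn ℝ Set.univ g ∧ Differentiable ℝ g ∧
      (∃ K : NNReal, LipschitzWith K (fderiv ℝ g)) ∧
      (∀ (x p : E), (∀ y, F x + inner ℝ p (y - x) ≤ F y) →
        (∀ y, F y ≤ F x + inner ℝ p (y - x) + a * ‖y - x‖ ^ 2) → g x = F x) := by
  have ha0 : (0:ℝ) < a := by linarith
  have hL0 : (0:ℝ) < L := by linarith
  -- the sup-convolution
  set h : E → ℝ := fun z => sSup (range fun y : E => F y - a * ‖z - y‖^2) with hh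
  have hbdda : ∀ z : E, BddAbove (range fun y : E => F y - a * ‖z - y‖^2) := by
    intro z
    refine ⟨F z + L^2 / (4*a), ?_⟩
    rintro _ ⟨y, rfl⟩
    show F y - a * ‖z - y‖^2 ≤ F z + L^2 / (4*a)
    have h1 : F y - F z ≤ L * ‖y - z‖ := (le_abs_self _).trans (hl y z)
    have h2 : ‖y - z‖ = ‖z - y‖ := norm_sub_rev _ _
    rw [h2] at h1
    have h3 : L * ‖z - y‖ - a * ‖z - y‖^2 ≤ L^2/(4*a) := by
      rw [le_div_iff₀ (by linarith : (0:ℝ) < 4*a)]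
      nlinarith [sq_nonneg (L - 2*a*‖z - y‖)]
    linarith
  have hge : ∀ z, F z ≤ h z := by
    intro z
    have h1 : F z - a * ‖z - z‖^2 ≤ h z := le_csSup (hbdda z) ⟨z, rfl⟩
    simpa using h1
  have hhl : ∀ z z', h z - h z' ≤ L * ‖z - z'‖ := by
    intro z z'
    rw [sub_le_iff_le_add]
    refine csSup_le (range_nonempty _) ?_
    rintro _ ⟨y, rfl⟩
    show F y - a * ‖z - y‖^2 ≤ L * ‖z - z'‖ + h z'
    have h3 : F (y + (z' - z)) - a * ‖z' - (y + (z' - z))‖^2 ≤ h z' :=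
      le_csSup (hbdda z') ⟨y + (z' - z), rfl⟩
    have e1 : z' - (y + (z' - z)) = z - y := by abel
    rw [e1] at h3
    have h2 : F y - F (y + (z' - z)) ≤ L * ‖z - z'‖ := by
      have := (le_abs_self _).trans (hl y (y + (z' - z)))
      have e2 : y - (y + (z' - z)) = z - z' := by abel
      rwa [e2] at this
    linarith
  have hhlip : ∀ z z', |h z - h z'| ≤ L * ‖z - z'‖ := by
    intro z z'
    rw [abs_sub_le_iff]
    exact ⟨hhl z z', by have := hhl z' z; rwa [norm_sub_rev] at this⟩
  have hhcont : Continuous h := by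
    have hlw : LipschitzWith (Real.toNNReal L) h := by
      apply LipschitzWith.of_dist_le_mul
      intro z z'
      rw [Real.dist_eq, dist_eq_norm, Real.coe_toNNReal _ (by linarith : (0:ℝ) ≤ L)]
      exact hhlip z z'
    exact hlw.continuous
  have hhconv : ConvexOn ℝ univ h := by
    refine ⟨convex_univ, fun x1 _ x2 _ s t hs ht hst => ?_⟩
    refine csSup_le (range_nonempty _) ?_
    rintro _ ⟨y, rfl⟩
    show F y - a * ‖(s • x1 + t • x2) - y‖^2 ≤ s * h x1 + t * h x2
    set y1 := y + (x1 - (s • x1 + t • x2)) with hy1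
    set y2 := y + (x2 - (s • x1 + t • x2)) with hy2
    have hy : s • y1 + t • y2 = y := by
      have e : s • y1 + t • y2
          = (s + t) • y + (s • x1 + t • x2) - (s + t) • (s • x1 + t • x2) := by
        rw [hy1, hy2]; module
      rw [hst] at e
      simpa using e
    have hn1 : ‖x1 - y1‖ = ‖(s • x1 + t • x2) - y‖ := by
      rw [hy1]
      congr 1
      abel
    have hn2 : ‖x2 - y2‖ = ‖(s • x1 + t • x2) - y‖ := by
      rw [hy2]
      congr 1
      abel
    have hFy : F y ≤ s * F y1 + t * F y2 := by
      conv_lhs => rw [← hy]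
      exact convex_combo hF y1 y2 hs ht hst
    have hb1 : F y1 - a * ‖x1 - y1‖^2 ≤ h x1 := le_csSup (hbdda x1) ⟨y1, rfl⟩
    have hb2 : F y2 - a * ‖x2 - y2‖^2 ≤ h x2 := le_csSup (hbdda x2) ⟨y2, rfl⟩
    have hq1 : s * (F y1 - a * ‖x1 - y1‖^2) ≤ s * h x1 := mul_le_mul_of_nonneg_left hb1 hs
    have hq2 : t * (F y2 - a * ‖x2 - y2‖^2) ≤ t * h x2 := mul_le_mul_of_nonneg_left hb2 ht
    rw [hn1] at hq1
    rw [hn2] at hq2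
    have hc : s * (a * ‖s • x1 + t • x2 - y‖^2) + t * (a * ‖s • x1 + t • x2 - y‖^2)
        = a * ‖s • x1 + t • x2 - y‖^2 := by
      linear_combination (a * ‖s • x1 + t • x2 - y‖^2) * hst
    nlinarith [hq1, hq2, hFy, hc]
  -- minimizers
  have hmin : ∀ x : E, ∃ p : E, ∀ y : E, h p + a * ‖x - p‖^2 ≤ h y + a * ‖x - y‖^2 := by
    intro x
    set θ : E → ℝ := fun y => h y + a * ‖x - y‖^2 with hθ
    have hθc : Continuous θ := by
      refine hhcont.add (continuous_const.mul ?_)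
      exact ((continuous_const.sub continuous_id).norm.pow 2)
    set Q : ℝ := |θ x| + |c₀| + L * ‖x‖ + L + 1 with hQ
    have hQ0 : 0 ≤ Q := by
      rw [hQ]
      positivity
    have hout : ∀ y : E, ‖y - x‖ > Q → θ x < θ y := by
      intro y hy
      have hd1 : L + 1 ≤ ‖y - x‖ := by
        have : L + 1 ≤ Q := by
          rw [hQ]
          nlinarith [abs_nonneg (θ x), abs_nonneg c₀, norm_nonneg x,
            mul_nonneg (le_of_lt hL0) (norm_nonneg x)]
        linarith
      have h1 : c₀ - L * ‖y‖ ≤ h y := (hlb y).trans (hge y)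
      have h2 : ‖y‖ ≤ ‖x‖ + ‖y - x‖ := by
        calc ‖y‖ = ‖x + (y - x)‖ := by congr 1; abel
          _ ≤ ‖x‖ + ‖y - x‖ := norm_add_le _ _
      have h3 : ‖x - y‖ = ‖y - x‖ := norm_sub_rev _ _
      have h4 : θ y = h y + a * ‖x - y‖^2 := rfl
      have h5 : a * ‖y - x‖^2 ≥ ‖y - x‖^2 := by nlinarith [sq_nonneg (‖y - x‖)]
      have h6 : ‖y - x‖^2 - L * ‖y - x‖ ≥ ‖y - x‖ := by nlinarith [hd1, hy, hQ0]
      have h7 : θ x ≤ |θ x| := le_abs_self _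
      have h8 : -|c₀| ≤ c₀ := neg_abs_le _
      rw [h4, h3]
      nlinarith [hy, hQ0, norm_nonneg x]
    obtain ⟨p, hpmem, hpmin⟩ := (isCompact_closedBall x Q).exists_isMinOn
      ⟨x, Metric.mem_closedBall_self hQ0⟩ hθc.continuousOn
    refine ⟨p, fun y => ?_⟩
    rcases le_or_gt (dist y x) Q with hcase | hcase
    · exact isMinOn_iff.1 hpmin y (Metric.mem_closedBall.2 hcase)
    · have h1 : θ x < θ y := hout y (by rwa [dist_eq_norm] at hcase)
      have h2 : θ p ≤ θ x := isMinOn_iff.1 hpmin x (Metric.mem_closedBall_self hQ0)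
      have h3 : θ p ≤ θ y := by linarith
      exact h3
  choose P hP using hmin
  set g : E → ℝ := fun x => h (P x) + a * ‖x - P x‖^2 with hgdef
  have hgmin : ∀ x y : E, g x ≤ h y + a * ‖x - y‖^2 := fun x y => hP x y
  have hgx : ∀ x : E, g x = h (P x) + a * ‖x - P x‖^2 := fun x => rfl
  -- convexity of g
  have hgconv : ConvexOn ℝ univ g := by
    refine ⟨convex_univ, fun x1 _ x2 _ s t hs ht hst => ?_⟩
    have h1 : g (s • x1 + t • x2) ≤ h (s • (P x1) + t • (P x2))
        + a * ‖(s • x1 + t • x2) - (s • (P x1) + t • (P x2))‖^2 := hgmin _ _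
    have h2 : h (s • (P x1) + t • (P x2)) ≤ s * h (P x1) + t * h (P x2) :=
      convex_combo hhconv _ _ hs ht hst
    have he : (s • x1 + t • x2) - (s • (P x1) + t • (P x2))
        = s • (x1 - P x1) + t • (x2 - P x2) := by module
    have hsq : ‖(s • x1 + t • x2) - (s • (P x1) + t • (P x2))‖^2
        ≤ s * ‖x1 - P x1‖^2 + t * ‖x2 - P x2‖^2 := by
      rw [he]
      exact sq_norm_combo hs ht hst
    have hsq' : a * ‖(s • x1 + t • x2) - (s • (P x1) + t • (P x2))‖^2
        ≤ a * (s * ‖x1 - P x1‖^2 + t * ‖x2 - P x2‖^2) :=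
      mul_le_mul_of_nonneg_left hsq (le_of_lt ha0)
    have hg1 : g x1 = h (P x1) + a * ‖x1 - P x1‖^2 := rfl
    have hg2 : g x2 = h (P x2) + a * ‖x2 - P x2‖^2 := rfl
    have hsmul : s • g x1 + t • g x2 = s * g x1 + t * g x2 := by
      rw [smul_eq_mul, smul_eq_mul]
    rw [hsmul, hg1, hg2]
    nlinarith [h1, h2, hsq']
  -- strong minimality
  have hstrong : ∀ x y : E, g x + (a/2) * ‖y - P x‖^2 ≤ h y + a * ‖x - y‖^2 := by
    intro x y
    have hmid := hgmin x ((1/2 : ℝ) • y + (1/2 : ℝ) • P x)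
    have h2 : h ((1/2 : ℝ) • y + (1/2 : ℝ) • P x) ≤ (1/2) * h y + (1/2) * h (P x) :=
      convex_combo hhconv _ _ (by norm_num) (by norm_num) (by norm_num)
    have hpar : ‖x - ((1/2 : ℝ) • y + (1/2 : ℝ) • P x)‖^2
        = (1/2)*‖x - y‖^2 + (1/2)*‖x - P x‖^2 - (1/4)*‖y - P x‖^2 := by
      have he : x - ((1/2 : ℝ) • y + (1/2 : ℝ) • P x)
          = (1/2 : ℝ) • ((x - y) + (x - P x)) := by module
      rw [he, norm_smul, Real.norm_eq_abs, (by norm_num : |(1/2 : ℝ)| = 1/2), mul_pow]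
      have hpl := norm_add_sq_real (x - y) (x - P x)
      have hmn := norm_sub_sq_real (x - y) (x - P x)
      have he2 : (x - y) - (x - P x) = P x - y := by abel
      rw [he2] at hmn
      have hyp : ‖P x - y‖ = ‖y - P x‖ := norm_sub_rev _ _
      rw [hyp] at hmn
      linear_combination (1/4) * hpl + (1/4) * hmn
    have hpar' : a * ‖x - ((1/2 : ℝ) • y + (1/2 : ℝ) • P x)‖^2
        = (a/2)*‖x - y‖^2 + (a/2)*‖x - P x‖^2 - (a/4)*‖y - P x‖^2 := by
      rw [hpar]; ring
    have hgx' := hgx x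
    linarith [hmid, h2, hpar']
  -- P is 2-Lipschitz
  have hplip : ∀ x z : E, ‖P x - P z‖ ≤ 2 * ‖x - z‖ := by
    intro x z
    have s1 := hstrong z (P x)
    have s2 := hstrong x (P z)
    have hgx' := hgx x
    have hgz' := hgx z
    have e1 : ‖z - P x‖^2 = ‖x - P x‖^2 + 2*(inner ℝ (z - x) (x - P x) : ℝ) + ‖z - x‖^2 := by
      have he : z - P x = (z - x) + (x - P x) := by abel
      rw [he, norm_add_sq_real]
      ring
    have e2 : ‖x - P z‖^2 = ‖z - P z‖^2 + 2*(inner ℝ (x - z) (z - P z) : ℝ) + ‖x - z‖^2 := by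
      have he : x - P z = (x - z) + (z - P z) := by abel
      rw [he, norm_add_sq_real]
      ring
    have eI : (inner ℝ (x - z) (z - P z) : ℝ) = -(inner ℝ (z - x) (z - P z) : ℝ) := by
      rw [(by abel : x - z = -(z - x)), inner_neg_left]
    have eK : (inner ℝ (z - x) (x - P x) : ℝ) - (inner ℝ (z - x) (z - P z) : ℝ)
        = -‖z - x‖^2 + (inner ℝ (z - x) (P z - P x) : ℝ) := by
      rw [← inner_sub_right]
      have he : (x - P x) - (z - P z) = -(z - x) + (P z - P x) := by abel
      rw [he, inner_add_right, inner_neg_right, real_inner_self_eq_norm_sq]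
      try ring
    have hCS : (inner ℝ (z - x) (P z - P x) : ℝ) ≤ ‖z - x‖ * ‖P z - P x‖ :=
      real_inner_le_norm _ _
    have hrev : ‖P z - P x‖ = ‖P x - P z‖ := norm_sub_rev _ _
    have hxz : ‖x - z‖ = ‖z - x‖ := norm_sub_rev _ _
    have hPP : ‖P x - P z‖^2 = ‖P z - P x‖^2 := by rw [hrev]
    -- assemble: a * ‖Px - Pz‖^2 ≤ 2a * inner ℝ (z-x) (Pz - Px)
    have key : a * ‖P x - P z‖^2 ≤ 2*a*(inner ℝ (z - x) (P z - P x) : ℝ) := by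
      have hs1' : g z + (a/2) * ‖P x - P z‖^2 ≤ h (P x) + a * ‖z - P x‖^2 := s1
      have hs2' : g x + (a/2) * ‖P z - P x‖^2 ≤ h (P z) + a * ‖x - P z‖^2 := s2
      have ee1 : a * ‖z - P x‖^2 = a*‖x - P x‖^2 + 2*a*(inner ℝ (z - x) (x - P x) : ℝ)
          + a*‖z - x‖^2 := by rw [e1]; ring
      have ee2 : a * ‖x - P z‖^2 = a*‖z - P z‖^2 + 2*a*(inner ℝ (x - z) (z - P z) : ℝ)
          + a*‖x - z‖^2 := by rw [e2]; ring
      have eI' : 2*a*(inner ℝ (x - z) (z - P z) : ℝ) = -(2*a*(inner ℝ (z - x) (z - P z) : ℝ)) := by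
        rw [eI]; ring
      have eK' : 2*a*(inner ℝ (z - x) (x - P x) : ℝ) - 2*a*(inner ℝ (z - x) (z - P z) : ℝ)
          = -(2*a*‖z - x‖^2) + 2*a*(inner ℝ (z - x) (P z - P x) : ℝ) := by
        linear_combination (2*a) * eK
      have hxz2 : ‖x - z‖^2 = ‖z - x‖^2 := by rw [hxz]
      nlinarith [hs1', hs2', ee1, ee2, eI', eK', hgx', hgz', hPP, hxz2]
    have key2 : ‖P x - P z‖^2 ≤ 2*(inner ℝ (z - x) (P z - P x) : ℝ) := by
      have := (mul_le_mul_iff_right₀ ha0).1 (by linarith [key] : a * ‖P x - P z‖^2 ≤ a * (2*(inner ℝ (z - x) (P z - P x) : ℝ)))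
      exact this
    have key3 : ‖P x - P z‖^2 ≤ 2*‖z - x‖ * ‖P x - P z‖ := by
      calc ‖P x - P z‖^2 ≤ 2*(inner ℝ (z - x) (P z - P x) : ℝ) := key2
        _ ≤ 2*(‖z - x‖ * ‖P z - P x‖) := by linarith [hCS]
        _ = 2*‖z - x‖ * ‖P x - P z‖ := by rw [hrev]; ring
    nlinarith [key3, norm_nonneg (P x - P z), norm_nonneg (z - x), hxz]
  -- upper quadratic expansion
  have hgub : ∀ x z : E, g z ≤ g x + 2*a*(inner ℝ (x - P x) (z - x) : ℝ) + a*‖z - x‖^2 := by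
    intro x z
    have h1 : g z ≤ h (P x) + a * ‖z - P x‖^2 := hgmin z (P x)
    have e1 : a * ‖z - P x‖^2 = a*‖x - P x‖^2 + 2*a*(inner ℝ (z - x) (x - P x) : ℝ)
        + a*‖z - x‖^2 := by
      have he : z - P x = (z - x) + (x - P x) := by abel
      rw [he, norm_add_sq_real]
      ring
    have hsym : (inner ℝ (z - x) (x - P x) : ℝ) = (inner ℝ (x - P x) (z - x) : ℝ) :=
      real_inner_comm _ _
    rw [hsym] at e1
    have hgx' := hgx x
    linarith [h1, e1]
  -- derivative
  have hderiv : ∀ x : E, HasFDerivAt g ((2*a) • (innerSL ℝ (x - P x))) x := by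
    intro x
    rw [hasFDerivAt_iff_isLittleO_nhds_zero]
    rw [Asymptotics.isLittleO_iff]
    intro c hc
    have hδ : (0:ℝ) < c / (7*a) := by positivity
    filter_upwards [Metric.ball_mem_nhds 0 hδ] with w hw
    set z : E := x + w with hzdef
    have hwz : z - x = w := by rw [hzdef]; abel
    have hzx : ‖z - x‖ < c/(7*a) := by
      rw [hwz]
      rwa [Metric.mem_ball, dist_zero_right] at hw
    have happ : ((2*a) • (innerSL ℝ (x - P x))) w = 2*a*(inner ℝ (x - P x) (z - x) : ℝ) := by
      rw [ContinuousLinearMap.smul_apply, innerSL_apply_apply, smul_eq_mul, hwz]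
    have hub' : g z - g x - 2*a*(inner ℝ (x - P x) (z - x) : ℝ) ≤ a*‖z - x‖^2 := by
      linarith [hgub x z]
    have hlb' : -(7*a*‖z - x‖^2) ≤ g z - g x - 2*a*(inner ℝ (x - P x) (z - x) : ℝ) := by
      have h1 := hgub z x
      have eJ : (inner ℝ (z - P z) (x - z) : ℝ) = -(inner ℝ (z - P z) (z - x) : ℝ) := by
        rw [(by abel : x - z = -(z - x)), inner_neg_right]
      have eK : (inner ℝ (z - P z) (z - x) : ℝ) - (inner ℝ (x - P x) (z - x) : ℝ)
          = (inner ℝ ((z - P z) - (x - P x)) (z - x) : ℝ) := (inner_sub_left _ _ _).symm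
      have hKb : |(inner ℝ ((z - P z) - (x - P x)) (z - x) : ℝ)| ≤ 3*‖z - x‖^2 := by
        refine (abs_real_inner_le_norm _ _).trans ?_
        have hn3 : ‖(z - P z) - (x - P x)‖ ≤ 3*‖z - x‖ := by
          have he : (z - P z) - (x - P x) = (z - x) - (P z - P x) := by abel
          rw [he]
          refine (norm_sub_le _ _).trans ?_
          have h4 := hplip z x
          linarith
        nlinarith [norm_nonneg (z - x), norm_nonneg ((z - P z) - (x - P x))]
      have hKlb : -(3*‖z - x‖^2) ≤ (inner ℝ ((z - P z) - (x - P x)) (z - x) : ℝ) :=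
        (abs_le.1 hKb).1
      have hxz2 : ‖x - z‖^2 = ‖z - x‖^2 := by rw [norm_sub_rev]
      nlinarith [h1, hKlb, eJ, eK, hxz2, ha0]
    show ‖g (x + w) - g x - ((2*a) • (innerSL ℝ (x - P x))) w‖ ≤ c * ‖w‖
    rw [happ, ← hzdef, Real.norm_eq_abs]
    have habs : |g z - g x - 2*a*(inner ℝ (x - P x) (z - x) : ℝ)| ≤ 7*a*‖z - x‖^2 := by
      rw [abs_le]
      constructor
      · exact hlb'
      · nlinarith [hub', sq_nonneg (‖z - x‖), ha0]
    refine habs.trans ?_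
    rw [← hwz]
    have hnn : (0:ℝ) ≤ ‖z - x‖ := norm_nonneg _
    have h7a : (0:ℝ) < 7*a := by linarith
    calc 7*a*‖z - x‖^2 = (7*a*‖z - x‖) * ‖z - x‖ := by ring
      _ ≤ ((7*a)*(c/(7*a))) * ‖z - x‖ := by
          apply mul_le_mul_of_nonneg_right _ hnn
          apply mul_le_mul_of_nonneg_left (le_of_lt hzx) (le_of_lt h7a)
      _ = c * ‖z - x‖ := by field_simp
  have hdiff : Differentiable ℝ g := fun x => (hderiv x).differentiableAt
  have hfd : ∀ x, fderiv ℝ g x = (2*a) • (innerSL ℝ (x - P x)) := fun x => (hderiv x).fderiv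
  have hlipf : LipschitzWith ((6*a).toNNReal) (fderiv ℝ g) := by
    apply LipschitzWith.of_dist_le_mul
    intro x z
    rw [hfd, hfd, dist_eq_norm]
    have he : (2*a) • (innerSL ℝ (x - P x)) - (2*a) • (innerSL ℝ (z - P z))
        = (2*a) • (innerSL ℝ ((x - P x) - (z - P z))) := by
      rw [← smul_sub]
      congr 1
      rw [← map_sub]
    rw [he, norm_smul, innerSL_apply_norm, Real.norm_eq_abs,
      abs_of_pos (by linarith : (0:ℝ) < 2*a)]
    have h1 : ‖(x - P x) - (z - P z)‖ ≤ 3*‖x - z‖ := by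
      have he2 : (x - P x) - (z - P z) = (x - z) - (P x - P z) := by abel
      rw [he2]
      refine (norm_sub_le _ _).trans ?_
      have h2 := hplip x z
      linarith
    rw [dist_eq_norm, Real.coe_toNNReal _ (by linarith : (0:ℝ) ≤ 6*a)]
    nlinarith [norm_nonneg (x - z)]
  -- the touching property
  refine ⟨g, hgconv, hdiff, ⟨(6*a).toNNReal, hlipf⟩, ?_⟩
  intro x p hsub hquad
  set b : ℝ := 1/(2*a) with hb
  have hb0 : 0 < b := by rw [hb]; positivity
  have hab : 2*a*b = 1 := by rw [hb]; field_simp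
  -- lower bound : F x ≤ g x
  have hlow : ∀ z : E, F x ≤ h z + a * ‖x - z‖^2 := by
    intro z
    have h1 : F (z + b • p) - a * ‖z - (z + b • p)‖^2 ≤ h z :=
      le_csSup (hbdda z) ⟨z + b • p, rfl⟩
    have e1 : ‖z - (z + b • p)‖^2 = b^2 * ‖p‖^2 := by
      have he : z - (z + b • p) = -(b • p) := by abel
      rw [he, norm_neg, norm_smul, Real.norm_eq_abs, abs_of_pos hb0, mul_pow]
    have h2 := hsub (z + b • p)
    have e2 : (inner ℝ p ((z + b • p) - x) : ℝ) = (inner ℝ p (z - x) : ℝ) + b * ‖p‖^2 := by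
      have he : (z + b • p) - x = (z - x) + b • p := by abel
      rw [he, inner_add_right, real_inner_smul_right, real_inner_self_eq_norm_sq]
      try ring
    rw [e2] at h2
    rw [e1] at h1
    have hcs : -(‖p‖ * ‖z - x‖) ≤ (inner ℝ p (z - x) : ℝ) :=
      (abs_le.1 (abs_real_inner_le_norm p (z - x))).1
    have hxz : ‖x - z‖ = ‖z - x‖ := norm_sub_rev _ _
    have key : 0 ≤ a*‖z - x‖^2 - ‖p‖*‖z - x‖ + (b/2)*‖p‖^2 := by
      have h4 : 4*a*(a*‖z - x‖^2 - ‖p‖*‖z - x‖ + (b/2)*‖p‖^2)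
          = (2*a*‖z - x‖ - ‖p‖)^2 := by
        linear_combination (‖p‖^2) * hab
      nlinarith [sq_nonneg (2*a*‖z - x‖ - ‖p‖), ha0]
    have he6 : a*b^2 = b/2 := by linear_combination (b/2) * hab
    rw [hxz]
    nlinarith [h1, h2, hcs, key, he6]
  have hFlg : F x ≤ g x := by
    have := hlow (P x)
    rw [← hgx x] at this
    exact this
  -- upper bound : g x ≤ F x
  have hup : g x ≤ F x := by
    have hz0 : g x ≤ h (x - b • p) + a * ‖x - (x - b • p)‖^2 := hgmin x _
    have e1 : ‖x - (x - b • p)‖^2 = b^2 * ‖p‖^2 := by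
      have he : x - (x - b • p) = b • p := by abel
      rw [he, norm_smul, Real.norm_eq_abs, abs_of_pos hb0, mul_pow]
    have hhub : h (x - b • p) ≤ F x - (b/2)*‖p‖^2 := by
      refine csSup_le (range_nonempty _) ?_
      rintro _ ⟨y, rfl⟩
      show F y - a * ‖(x - b • p) - y‖^2 ≤ F x - (b/2)*‖p‖^2
      have h2 := hquad y
      have e2 : ‖(x - b • p) - y‖^2 = ‖(y - x) + b • p‖^2 := by
        rw [(by abel : (x - b • p) - y = -((y - x) + b • p)), norm_neg]
      have e3 : ‖(y - x) + b • p‖^2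
          = ‖y - x‖^2 + 2*b*(inner ℝ (y - x) p : ℝ) + b^2*‖p‖^2 := by
        rw [norm_add_sq_real, real_inner_smul_right, norm_smul, Real.norm_eq_abs,
          abs_of_pos hb0, mul_pow]
        ring
      have hsym : (inner ℝ (y - x) p : ℝ) = (inner ℝ p (y - x) : ℝ) := real_inner_comm _ _
      rw [hsym] at e3
      have he6 : a*b^2 = b/2 := by linear_combination (b/2) * hab
      have he7 : 2*a*b*(inner ℝ p (y - x) : ℝ) = (inner ℝ p (y - x) : ℝ) := by
        linear_combination ((inner ℝ p (y - x) : ℝ)) * hab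
      nlinarith [h2, e2, e3, he6, he7]
    have he6 : a*b^2 = b/2 := by linear_combination (b/2) * hab
    rw [e1] at hz0
    nlinarith [hz0, hhub, he6]
  exact le_antisymm hup hFlg

end

end LusinStmt14

open LusinStmt14 in
/-- every convex function on `ℝⁿ` agrees, off a subset of `A` of measure
less than `ε`, with a convex `C^{1,1}` function. -/
theorem lusin_stmt_14 {n : ℕ} (f : EuclideanSpace ℝ (Fin n) → ℝ)
    (hf : ConvexOn ℝ Set.univ f)
    (A : Set (EuclideanSpace ℝ (Fin n))) (hA : MeasurableSet A) (hAfin : volume A < ⊤)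
    (ε : ℝ) (hε : 0 < ε) :
    ∃ g : EuclideanSpace ℝ (Fin n) → ℝ, ConvexOn ℝ Set.univ g ∧
      Differentiable ℝ g ∧ (∃ K : NNReal, LipschitzWith K (fderiv ℝ g)) ∧
      volume {x ∈ A | f x ≠ g x} < ENNReal.ofReal ε := by
  classical
  have hhalf : (0 : ENNReal) < ENNReal.ofReal (ε/2) := ENNReal.ofReal_pos.2 (by linarith)
  -- Step 1: choose R
  have h1 : Filter.Tendsto (fun k : ℕ => volume (A \ Metric.closedBall (0:(EuclideanSpace ℝ (Fin n))) k))
      Filter.atTop (nhds (volume (⋂ k : ℕ, A \ Metric.closedBall (0:(EuclideanSpace ℝ (Fin n))) k))) := by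
    apply tendsto_measure_iInter_atTop
    · exact fun k => (hA.diff measurableSet_closedBall).nullMeasurableSet
    · intro k k' hk
      apply diff_subset_diff_right
      exact Metric.closedBall_subset_closedBall (by exact_mod_cast hk)
    · exact ⟨0, ne_of_lt (lt_of_le_of_lt (measure_mono diff_subset) hAfin)⟩
  have hempty : (⋂ k : ℕ, A \ Metric.closedBall (0:(EuclideanSpace ℝ (Fin n))) (k:ℝ)) = ∅ := by
    ext x
    simp only [mem_iInter, mem_empty_iff_false, iff_false, not_forall]
    obtain ⟨k, hk⟩ := exists_nat_gt ‖x‖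
    exact ⟨k, fun hc => absurd (by simpa [dist_zero_right] using hc.2 : ¬ ‖x‖ ≤ (k:ℝ))
      (not_not.2 (le_of_lt hk))⟩
  rw [hempty, measure_empty] at h1
  obtain ⟨k₀, hk₀⟩ := (h1.eventually_lt_const hhalf).exists
  set R : ℝ := max (k₀ : ℝ) 1 with hR
  have hR1 : 1 ≤ R := le_max_right _ _
  have hRA : volume (A \ Metric.closedBall (0:(EuclideanSpace ℝ (Fin n))) R) < ENNReal.ofReal (ε/2) :=
    lt_of_le_of_lt (measure_mono (diff_subset_diff_right
      (Metric.closedBall_subset_closedBall (le_max_left _ _)))) hk₀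
  -- Step 2: truncation
  obtain ⟨L, F, hL1, hFconv, hFlip, hagree, hFlb⟩ := truncation hf R hR1
  have hFlipW : LipschitzWith (Real.toNNReal L) F := by
    apply LipschitzWith.of_dist_le_mul
    intro x y
    rw [Real.dist_eq, dist_eq_norm, Real.coe_toNNReal _ (by linarith : (0:ℝ) ≤ L)]
    exact hFlip x y
  have hFcont : Continuous F := hFlipW.continuous
  -- Step 3: good sets
  set Em : ℕ → Set (EuclideanSpace ℝ (Fin n)) := fun m => {x | DifferentiableAt ℝ F x} ∩
    ⋂ j : Fin n, (Gset F (EuclideanSpace.single j (1:ℝ)) m ∩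
      Gset F (-EuclideanSpace.single j (1:ℝ)) m) with hEm
  have hEmMeas : ∀ m, MeasurableSet (Em m) := by
    intro m
    refine (measurableSet_of_differentiableAt ℝ F).inter ?_
    exact MeasurableSet.iInter fun j => ((gset_closed hFcont _ m).measurableSet.inter
      (gset_closed hFcont _ m).measurableSet)
  have hEmmono : Monotone Em := by
    intro m m' hm
    refine inter_subset_inter subset_rfl ?_
    refine iInter_mono fun j => inter_subset_inter (gset_mono hm) (gset_mono hm)
  -- Step 4: a.e. covering
  have hae : ∀ᵐ x : (EuclideanSpace ℝ (Fin n)), x ∈ ⋃ m : ℕ, Em m := by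
    have hrad : ∀ᵐ x : (EuclideanSpace ℝ (Fin n)), DifferentiableAt ℝ F x := hFlipW.ae_differentiableAt
    have h2 : ∀ᵐ x : (EuclideanSpace ℝ (Fin n)), ∀ j : Fin n, (x ∈ ⋃ m : ℕ, Gset F (EuclideanSpace.single j (1:ℝ)) m) ∧
        (x ∈ ⋃ m : ℕ, Gset F (-EuclideanSpace.single j (1:ℝ)) m) := by
      rw [MeasureTheory.ae_all_iff]
      intro j
      filter_upwards [ae_mem_gset hFconv hFcont hL1 hFlip (EuclideanSpace.single j (1:ℝ)),
        ae_mem_gset hFconv hFcont hL1 hFlip (-EuclideanSpace.single j (1:ℝ))] with x ha hb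
      exact ⟨ha, hb⟩
    filter_upwards [hrad, h2] with x hx1 hx2
    have hex : ∀ j : Fin n, ∃ m : ℕ, x ∈ Gset F (EuclideanSpace.single j (1:ℝ)) m ∩
        Gset F (-EuclideanSpace.single j (1:ℝ)) m := by
      intro j
      obtain ⟨h1', h2'⟩ := hx2 j
      obtain ⟨m1, hm1⟩ := mem_iUnion.1 h1'
      obtain ⟨m2, hm2⟩ := mem_iUnion.1 h2'
      exact ⟨max m1 m2, gset_mono (le_max_left _ _) hm1, gset_mono (le_max_right _ _) hm2⟩
    choose mj hmj using hex
    refine mem_iUnion.2 ⟨Finset.univ.sup mj, hx1, mem_iInter.2 fun j => ?_⟩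
    obtain ⟨ha', hb'⟩ := hmj j
    exact ⟨gset_mono (Finset.le_sup (Finset.mem_univ j)) ha',
      gset_mono (Finset.le_sup (Finset.mem_univ j)) hb'⟩
  -- Step 5: choose m₀
  set S : Set (EuclideanSpace ℝ (Fin n)) := A ∩ Metric.closedBall (0:(EuclideanSpace ℝ (Fin n))) R with hS
  have h3 : Filter.Tendsto (fun m : ℕ => volume (S \ Em m)) Filter.atTop
      (nhds (volume (⋂ m : ℕ, S \ Em m))) := by
    apply tendsto_measure_iInter_atTop
    · exact fun m => ((hA.inter measurableSet_closedBall).diff (hEmMeas m)).nullMeasurableSet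
    · intro m m' hm
      exact diff_subset_diff_right (hEmmono hm)
    · exact ⟨0, ne_of_lt (lt_of_le_of_lt (measure_mono (diff_subset.trans inter_subset_left))
        hAfin)⟩
  have h4 : volume (⋂ m : ℕ, S \ Em m) = 0 := by
    have hsub : (⋂ m : ℕ, S \ Em m) ⊆ {x : (EuclideanSpace ℝ (Fin n)) | ¬ x ∈ ⋃ m : ℕ, Em m} := by
      intro x hx
      simp only [mem_iInter, mem_diff] at hx
      simp only [mem_setOf_eq, mem_iUnion, not_exists]
      exact fun m => (hx m).2
    exact measure_mono_null hsub (by rwa [← MeasureTheory.ae_iff] )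
  rw [h4] at h3
  obtain ⟨m₀, hm₀⟩ := (h3.eventually_lt_const hhalf).exists
  -- Step 6: build g
  set a : ℝ := n * m₀ + 1 with ha
  have ha1 : 1 ≤ a := by
    rw [ha]
    have : (0:ℝ) ≤ (n:ℝ) * (m₀:ℝ) := by positivity
    linarith
  obtain ⟨g, hgconv, hgdiff, hK, htouch⟩ := smooth_touch hFconv hL1 hFlip hFlb ha1
  refine ⟨g, hgconv, hgdiff, hK, ?_⟩
  -- Step 7: measure bound
  have hsub : {x ∈ A | f x ≠ g x} ⊆ (A \ Metric.closedBall (0:(EuclideanSpace ℝ (Fin n))) R) ∪ (S \ Em m₀) := by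
    intro x hx
    obtain ⟨hxA, hxne⟩ := hx
    by_cases hxB : x ∈ Metric.closedBall (0:(EuclideanSpace ℝ (Fin n))) R
    · right
      refine ⟨⟨hxA, hxB⟩, fun hxE => ?_⟩
      obtain ⟨hxD, hxG⟩ := hxE
      have hd : HasFDerivAt F (fderiv ℝ F x) x := hxD.hasFDerivAt
      set p : (EuclideanSpace ℝ (Fin n)) := (InnerProductSpace.toDual ℝ (EuclideanSpace ℝ (Fin n))).symm (fderiv ℝ F x) with hp
      have hpin : ∀ u : (EuclideanSpace ℝ (Fin n)), (inner ℝ p u : ℝ) = fderiv ℝ F x u := fun u =>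
        InnerProductSpace.toDual_symm_apply
      have hsubg : ∀ y, F x + inner ℝ p (y - x) ≤ F y := by
        intro y
        rw [hpin]
        exact subgrad hFconv hd y
      have hquad : ∀ y, F y ≤ F x + inner ℝ p (y - x) + a * ‖y - x‖^2 := by
        intro y
        have hq := quad_upper hFconv hFcont hL1 hFlip hd (m := m₀)
          (fun j => ⟨(mem_iInter.1 hxG j).1, (mem_iInter.1 hxG j).2⟩) y
        rw [hpin]
        have hle : (n * m₀ : ℝ) ≤ a := by rw [ha]; linarith
        nlinarith [sq_nonneg ‖y - x‖]
      have hgF : g x = F x := htouch x p hsubg hquad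
      have hfF : F x = f x := hagree x hxB
      exact hxne (by rw [← hfF, ← hgF])
    · left
      exact ⟨hxA, hxB⟩
  calc volume {x ∈ A | f x ≠ g x}
      ≤ volume ((A \ Metric.closedBall (0:(EuclideanSpace ℝ (Fin n))) R) ∪ (S \ Em m₀)) := measure_mono hsub
    _ ≤ volume (A \ Metric.closedBall (0:(EuclideanSpace ℝ (Fin n))) R) + volume (S \ Em m₀) := measure_union_le _ _
    _ < ENNReal.ofReal (ε/2) + ENNReal.ofReal (ε/2) := ENNReal.add_lt_add hRA hm₀
    _ = ENNReal.ofReal ε := by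
        rw [← ENNReal.ofReal_add (by linarith) (by linarith), add_halves]
end

section
/- Let f : ℝⁿ → ℝ be convex and differentiable almost everywhere, let C ⊆ ℝⁿ be measurable with 𝓛ⁿ(ℝⁿ \ C) < ∞, and suppose there is a unit vector v with ⟨∇g(x), v⟩ = 0 for all x ∈ C, where g(x) = f(x) − f(y₀) − ⟨∇f(y₀), x − y₀⟩ for some fixed y₀ ∈ C at which f is differentiable. Then g is constant along some line parallel to v; in particular f is not essentially coercive. -/
open Set MeasureTheory Filter Bornology

private lemma lusin18_slice {m : ℕ} (v : EuclideanSpace ℝ (Fin (m+1))) (hv : ‖v‖ = 1)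
    (B : Set (EuclideanSpace ℝ (Fin (m+1)))) (hB : MeasurableSet B) (hBfin : volume B < ⊤) :
    ∃ x, volume {t : ℝ | x + t • v ∈ B} < ⊤ := by
  classical
  have hcard : Module.finrank ℝ (EuclideanSpace ℝ (Fin (m+1))) = Fintype.card (Fin (m+1)) := by
    simp [finrank_euclideanSpace]
  have horth : Orthonormal ℝ (({0} : Set (Fin (m+1))).restrict (fun _ => v)) := by
    constructor
    · intro i; exact hv
    · intro i j hij
      exact absurd (Subtype.ext (i.2.trans j.2.symm)) hij
  obtain ⟨b, hb⟩ := horth.exists_orthonormalBasis_extension_of_card_eq hcard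
  have hb0 : b 0 = v := hb 0 rfl
  set e₂ := (MeasurableEquiv.toLp 2 (Fin (m+1) → ℝ)).symm with he₂
  set e₃ := MeasurableEquiv.piFinSuccAbove (fun _ : Fin (m+1) => ℝ) 0 with he₃
  set F : EuclideanSpace ℝ (Fin (m+1)) → ℝ × (Fin m → ℝ) :=
    fun z => e₃ (e₂ (b.repr z)) with hF
  have hFmp : MeasurePreserving F := by
    exact ((MeasureTheory.volume_preserving_piFinSuccAbove (fun _ : Fin (m+1) => ℝ) 0).comp
      (EuclideanSpace.volume_preserving_symm_measurableEquiv_toLp (Fin (m+1)))).comp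
      b.measurePreserving_repr
  have hFadd : ∀ (x : EuclideanSpace ℝ (Fin (m+1))) (t : ℝ),
      F (x + t • v) = ((F x).1 + t, (F x).2) := by
    intro x t
    have h : b.repr (x + t • v) = b.repr x + t • EuclideanSpace.single 0 (1:ℝ) := by
      rw [map_add, LinearIsometryEquiv.map_smul, ← hb0, b.repr_self]
    have h2 : e₂ (b.repr (x + t • v)) = e₂ (b.repr x) + t • (Pi.single 0 1 : Fin (m+1) → ℝ) := by
      rw [h]; rfl
    show e₃ _ = _
    rw [h2]
    show ((Fin.insertNthEquiv (fun _ => ℝ) 0).symm) _ = _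
    ext
    · simp [F, e₃, Fin.insertNthEquiv]
    · simp [F, e₃, Fin.insertNthEquiv, Fin.tail, Pi.single_eq_of_ne (Fin.succ_ne_zero _)]
  set B' : Set (ℝ × (Fin m → ℝ)) := F '' B with hB'
  have hFme : MeasurableEmbedding F :=
    (e₃.measurableEmbedding.comp e₂.measurableEmbedding).comp
      b.repr.toHomeomorph.measurableEmbedding
  have hB'meas : MeasurableSet B' := hFme.measurableSet_image' hB
  have hpre : F ⁻¹' B' = B := by
    ext z; constructor
    · rintro ⟨w, hw, hwz⟩
      rwa [← hFme.injective hwz]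
    · intro hz; exact ⟨z, hz, rfl⟩
  have hB'fin : (volume : Measure (ℝ × (Fin m → ℝ))) B' < ⊤ := by
    have h1 : volume (F ⁻¹' B') = volume B' := hFmp.measure_preimage hB'meas.nullMeasurableSet
    rw [hpre] at h1
    rwa [← h1]
  have hfub : (volume : Measure (ℝ × (Fin m → ℝ))) B'
      = ∫⁻ y, volume ((fun s => (s, y)) ⁻¹' B') ∂(volume : Measure (Fin m → ℝ)) := by
    rw [MeasureTheory.Measure.volume_eq_prod]
    exact Measure.prod_apply_symm hB'meas
  have hae : ∀ᵐ y ∂(volume : Measure (Fin m → ℝ)),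
      volume ((fun s => (s, y)) ⁻¹' B') < ⊤ := by
    apply ae_lt_top (measurable_measure_prodMk_right hB'meas)
    rw [← hfub]; exact hB'fin.ne
  obtain ⟨y, hy⟩ := hae.exists
  refine ⟨(b.repr.symm (e₂.symm (e₃.symm (0, y)))), ?_⟩
  have hFx : F (b.repr.symm (e₂.symm (e₃.symm (0, y)))) = (0, y) := by
    simp [F]
  have hset : {t : ℝ | (b.repr.symm (e₂.symm (e₃.symm (0, y)))) + t • v ∈ B}
      = (fun s => (s, y)) ⁻¹' B' := by
    ext t
    have h3 : ((b.repr.symm (e₂.symm (e₃.symm (0, y)))) + t • v ∈ B)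
        ↔ F ((b.repr.symm (e₂.symm (e₃.symm (0, y)))) + t • v) ∈ B' := by
      constructor
      · intro h; exact ⟨_, h, rfl⟩
      · rintro ⟨w, hw, hwz⟩; rwa [← hFme.injective hwz]
    rw [mem_setOf_eq, h3, hFadd, hFx]
    simp
  rw [hset]; exact hy

/-- if the directional derivative of `g` in a direction `v` vanishes on a
set `C` of cofinite measure, then `g` is constant along some line parallel to `v`, and
in particular `f` is not essentially coercive. -/
theorem lusin_stmt_18 {n : ℕ} (f : EuclideanSpace ℝ (Fin n) → ℝ)
    (hf : ConvexOn ℝ Set.univ f)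
    (hdae : ∀ᵐ x ∂(volume : Measure (EuclideanSpace ℝ (Fin n))), DifferentiableAt ℝ f x)
    (C : Set (EuclideanSpace ℝ (Fin n))) (hC : MeasurableSet C)
    (hCfin : volume (Set.univ \ C) < ⊤)
    (y₀ : EuclideanSpace ℝ (Fin n)) (hy₀ : y₀ ∈ C) (hdy₀ : DifferentiableAt ℝ f y₀)
    (g : EuclideanSpace ℝ (Fin n) → ℝ)
    (hgdef : ∀ x, g x = f x - f y₀ - (inner ℝ (gradient f y₀) (x - y₀) : ℝ))
    (v : EuclideanSpace ℝ (Fin n)) (hv : ‖v‖ = 1)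
    (hdir : ∀ x ∈ C, DifferentiableAt ℝ g x → fderiv ℝ g x v = 0) :
    (∃ x : EuclideanSpace ℝ (Fin n), ∀ t : ℝ, g (x + t • v) = g x) ∧
      ¬ ∃ ℓ : EuclideanSpace ℝ (Fin n) →ₗ[ℝ] ℝ,
        Tendsto (fun x => f x - ℓ x) (cobounded (EuclideanSpace ℝ (Fin n))) atTop := by
  classical
  cases n with
  | zero =>
    exfalso
    have hv0 : v = 0 := by ext i; exact i.elim0
    rw [hv0, norm_zero] at hv
    exact one_ne_zero hv.symm
  | succ m =>
    set w := gradient f y₀ with hw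
    have hgfun : g = fun x => f x - f y₀ - (inner ℝ w (x - y₀) : ℝ) := funext hgdef
    -- convexity of g
    have hgc : ConvexOn ℝ Set.univ g := by
      rw [hgfun]
      refine ⟨convex_univ, ?_⟩
      intro p _ q _ a b ha hb hab
      obtain rfl : b = 1 - a := by linarith
      have h1 := hf.2 (mem_univ p) (mem_univ q) ha hb hab
      have h2 : (inner ℝ w (a • p + (1-a) • q - y₀) : ℝ)
          = a * inner ℝ w (p - y₀) + (1-a) * inner ℝ w (q - y₀) := by
        have h3 : a • p + (1-a) • q - y₀ = a • (p - y₀) + (1-a) • (q - y₀) := by module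
        rw [h3, inner_add_right, inner_smul_right, inner_smul_right]
      simp only [smul_eq_mul] at h1 ⊢
      rw [h2]
      ring_nf
      ring_nf at h1
      linarith
    have hgdiff : ∀ p, DifferentiableAt ℝ f p → DifferentiableAt ℝ g p := by
      intro p hp
      rw [hgfun]
      exact (hp.sub_const _).sub
        ((differentiableAt_const w).inner ℝ (differentiableAt_id.sub_const y₀))
    set D := {x : EuclideanSpace ℝ (Fin (m+1)) | DifferentiableAt ℝ f x} with hDdef
    have hD : MeasurableSet D := measurableSet_of_differentiableAt ℝ f
    set B := Cᶜ ∪ Dᶜ with hBdef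
    have hBmeas : MeasurableSet B := hC.compl.union hD.compl
    have hDc : volume Dᶜ = 0 := by
      have h0 : volume {x : EuclideanSpace ℝ (Fin (m+1)) | ¬ DifferentiableAt ℝ f x} = 0 :=
        ae_iff.mp hdae
      exact h0
    have hBfin : volume B < ⊤ := by
      refine lt_of_le_of_lt (measure_union_le _ _) ?_
      rw [hDc, add_zero, compl_eq_univ_diff]
      exact hCfin
    obtain ⟨x, hx⟩ := lusin18_slice v hv B hBmeas hBfin
    set T := {t : ℝ | x + t • v ∈ B} with hTdef
    set S := {t : ℝ | x + t • v ∈ C ∧ DifferentiableAt ℝ f (x + t • v)} with hSdef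
    have hS : ∀ t, t ∈ S ↔ t ∉ T := by
      intro t
      simp only [hSdef, hTdef, hBdef, mem_setOf_eq, mem_union, mem_compl_iff, not_or, not_not]
      rfl
    have hSup : ∀ r : ℝ, ∃ s ∈ S, r < s := by
      intro r
      by_contra hcon
      push_neg at hcon
      have hsub : Ioi r ⊆ T := by
        intro s hs
        by_contra hsT
        exact absurd hs (not_lt.2 (hcon s ((hS s).2 hsT)))
      have h7 : (volume : Measure ℝ) (Ioi r) ≤ volume T := measure_mono hsub
      rw [Real.volume_Ioi] at h7
      exact absurd (lt_of_le_of_lt h7 hx) (lt_irrefl ⊤)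
    have hSlow : ∀ r : ℝ, ∃ s ∈ S, s < r := by
      intro r
      by_contra hcon
      push_neg at hcon
      have hsub : Iio r ⊆ T := by
        intro s hs
        by_contra hsT
        exact absurd hs (not_lt.2 (hcon s ((hS s).2 hsT)))
      have h7 : (volume : Measure ℝ) (Iio r) ≤ volume T := measure_mono hsub
      rw [Real.volume_Iio] at h7
      exact absurd (lt_of_le_of_lt h7 hx) (lt_irrefl ⊤)
    set φ : ℝ → ℝ := fun t => g (x + t • v) with hφdef
    have hφc : ConvexOn ℝ Set.univ φ := by
      refine ⟨convex_univ, ?_⟩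
      intro s _ t _ a b ha hb hab
      have h := hgc.2 (mem_univ (x + s • v)) (mem_univ (x + t • v)) ha hb hab
      obtain rfl : b = 1 - a := by linarith
      have hpt : a • (x + s • v) + (1-a) • (x + t • v) = x + (a • s + (1-a) • t) • v := by
        simp only [smul_eq_mul]; module
      rwa [hpt] at h
    have hφd : ∀ s ∈ S, HasDerivAt φ 0 s := by
      rintro s ⟨hsC, hsD⟩
      have hdg := hgdiff _ hsD
      have h0 := hdir _ hsC hdg
      have hline : HasDerivAt (fun t : ℝ => x + t • v) v s := by
        simpa using ((hasDerivAt_id s).smul_const v).const_add x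
      have h := hdg.hasFDerivAt.comp_hasDerivAt s hline; rw [h0] at h; exact h
    have key1 : ∀ s ∈ S, ∀ u : ℝ, s < u → φ s ≤ φ u := by
      intro s hs u hsu
      have h1 := hφc.le_slope_of_hasDerivAt (mem_univ s) (mem_univ u) hsu (hφd s hs)
      rw [slope_def_field] at h1
      have hpos : (0:ℝ) < u - s := by linarith
      have h2 := mul_nonneg h1 hpos.le
      rw [div_mul_cancel₀ _ (ne_of_gt hpos)] at h2
      linarith
    have key2 : ∀ s ∈ S, ∀ u : ℝ, u < s → φ s ≤ φ u := by
      intro s hs u hus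
      have h1 := hφc.slope_le_of_hasDerivAt (mem_univ u) (mem_univ s) hus (hφd s hs)
      rw [slope_def_field] at h1
      have hpos : (0:ℝ) < s - u := by linarith
      have h2 := mul_nonpos_of_nonpos_of_nonneg h1 hpos.le
      rw [div_mul_cancel₀ _ (ne_of_gt hpos)] at h2
      linarith
    have hlineconst : ∀ t : ℝ, g (x + t • v) = g x := by
      have claim : ∀ t : ℝ, φ t = φ 0 := by
        intro t
        obtain ⟨s₁, hs₁S, hs₁⟩ := hSlow (min t 0)
        obtain ⟨s₂, hs₂S, hs₂⟩ := hSup (max t 0)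
        have h₁t : s₁ < t := lt_of_lt_of_le hs₁ (min_le_left _ _)
        have h₁0 : s₁ < 0 := lt_of_lt_of_le hs₁ (min_le_right _ _)
        have h₂t : t < s₂ := lt_of_le_of_lt (le_max_left _ _) hs₂
        have h₂0 : (0:ℝ) < s₂ := lt_of_le_of_lt (le_max_right _ _) hs₂
        have hcc : φ s₂ = φ s₁ := le_antisymm (key2 s₂ hs₂S s₁ (by linarith)) (key1 s₁ hs₁S s₂ (by linarith))
        have hval : ∀ u : ℝ, s₁ < u → u < s₂ → φ u = φ s₁ := by
          intro u hu1 hu2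
          have hlow : φ s₁ ≤ φ u := key1 s₁ hs₁S u hu1
          have hd : (0:ℝ) < s₂ - s₁ := by linarith
          set a := (s₂ - u)/(s₂ - s₁) with hadef
          set b := (u - s₁)/(s₂ - s₁) with hbdef
          have ha : 0 ≤ a := div_nonneg (by linarith) hd.le
          have hb : 0 ≤ b := div_nonneg (by linarith) hd.le
          have hab : a + b = 1 := by
            rw [hadef, hbdef, ← add_div, div_eq_one_iff_eq (ne_of_gt hd)]
            ring
          have hcomb := hφc.2 (mem_univ s₁) (mem_univ s₂) ha hb hab
          have hu : a • s₁ + b • s₂ = u := by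
            simp only [smul_eq_mul, hadef, hbdef]
            field_simp
            ring
          rw [hu] at hcomb
          rw [hcc] at hcomb
          simp only [smul_eq_mul] at hcomb
          have hsum : a * φ s₁ + b * φ s₁ = φ s₁ := by
            rw [← add_mul, hab, one_mul]
          linarith
        rw [hval t h₁t h₂t, hval 0 h₁0 h₂0]
      intro t
      have h := claim t
      have h0 : φ 0 = g x := by
        simp only [hφdef, zero_smul, add_zero]
      rw [← h0, ← h]
    refine ⟨⟨x, hlineconst⟩, ?_⟩
    rintro ⟨ℓ, hℓ⟩
    -- f is affine along the line
    have hfline : ∀ t : ℝ, f (x + t • v) = f x + t * (inner ℝ w v : ℝ) := by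
      intro t
      have h1 := hgdef (x + t • v)
      have h2 := hgdef x
      have h3 := hlineconst t
      have hi : (inner ℝ w (x + t • v - y₀) : ℝ)
          = (inner ℝ w (x - y₀) : ℝ) + t * (inner ℝ w v : ℝ) := by
        have h4 : x + t • v - y₀ = (x - y₀) + t • v := by module
        rw [h4, inner_add_right, inner_smul_right]
      rw [h3, h2] at h1
      rw [hi] at h1
      linarith
    have hcomp : ∀ t : ℝ, f (x + t • v) - ℓ (x + t • v)
        = (f x - ℓ x) + t * ((inner ℝ w v : ℝ) - ℓ v) := by
      intro t
      rw [hfline t, map_add, LinearMap.map_smul, smul_eq_mul]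
      ring
    have hnorm : ∀ t : ℝ, |t| - ‖x‖ ≤ ‖x + t • v‖ := by
      intro t
      have h1 := norm_sub_le (x + t • v) x
      have h2 : x + t • v - x = t • v := by module
      rw [h2, norm_smul, hv, mul_one, Real.norm_eq_abs] at h1
      linarith
    have htop : Tendsto (fun t : ℝ => x + t • v) atTop (cobounded (EuclideanSpace ℝ (Fin (m+1)))) := by
      rw [← tendsto_norm_atTop_iff_cobounded]
      apply tendsto_atTop_mono (fun t => ?_) (tendsto_atTop_add_const_right _ (-‖x‖) tendsto_id)
      have := hnorm t
      have : t - ‖x‖ ≤ |t| - ‖x‖ := by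
        have := le_abs_self t; linarith
      calc (fun t => t + -‖x‖) t = t - ‖x‖ := by ring
        _ ≤ |t| - ‖x‖ := this
        _ ≤ ‖x + t • v‖ := hnorm t
    have hbot : Tendsto (fun t : ℝ => x + t • v) atBot (cobounded (EuclideanSpace ℝ (Fin (m+1)))) := by
      rw [← tendsto_norm_atTop_iff_cobounded]
      apply tendsto_atTop_mono (fun t => ?_)
        (tendsto_atTop_add_const_right _ (-‖x‖) tendsto_neg_atBot_atTop)
      have h5 : -t ≤ |t| := neg_le_abs t
      calc (fun s : ℝ => -s + -‖x‖) t = -t - ‖x‖ := by ring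
        _ ≤ |t| - ‖x‖ := by linarith
        _ ≤ ‖x + t • v‖ := hnorm t
    set c := f x - ℓ x with hcdef
    set Bc := (inner ℝ w v : ℝ) - ℓ v with hBcdef
    have hPP : Tendsto (fun t : ℝ => c + t * Bc) atTop atTop := by
      have h6 := hℓ.comp htop
      apply h6.congr
      intro t
      simp only [Function.comp_apply]
      rw [hcomp t]
    have hMM : Tendsto (fun t : ℝ => c + t * Bc) atBot atTop := by
      have h6 := hℓ.comp hbot
      apply h6.congr
      intro t
      simp only [Function.comp_apply]
      rw [hcomp t]
    obtain ⟨t₁, ht₁a, ht₁b⟩ :=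
      ((hPP.eventually (eventually_ge_atTop (c + 1))).and (eventually_ge_atTop (1:ℝ))).exists
    obtain ⟨t₂, ht₂a, ht₂b⟩ :=
      ((hMM.eventually (eventually_ge_atTop (c + 1))).and (eventually_le_atBot (-1:ℝ))).exists
    rcases le_or_gt Bc 0 with hBc | hBc
    · nlinarith
    · nlinarith
end
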